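/- arXiv:1310.4621 — 5 statements merged into one kernel-verified Lean document; each statement's English description precedes it below -/
import Mathlib

section
/- Let A ∈ ℝ^{d×d} satisfy 0 < τ(A) < ∞ (so A is invertible), and denote the entries of the inverse matrix by A^{-1}_{ij}. Then τ(A) = 1 / min((A^{-1}𝟙)^+) = max_{i=1,...,d} ( ( (Σ_{j=1}^d A^{-1}_{ij})^+ )^{-1} ), where 𝟙 = (1,...,1)'. -/
open scoped ENNReal

noncomputable def vmin {d : ℕ} (x : Fin d → ℝ) : ℝ := ⨅ i, x i

noncomputable def vpos {d : ℕ} (x : Fin d → ℝ) : Fin d → ℝ := fun i => max (x i) 0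

noncomputable def tau {d : ℕ} (A : Matrix (Fin d) (Fin d) ℝ) : ℝ≥0∞ :=
  ⨆ x ∈ {x : Fin d → ℝ | (∀ i, 0 < x i) ∧ vmin x = 1},
    ENNReal.ofReal (vmin (vpos (A.mulVec x)))

section Aux

variable {d : ℕ} [NeZero d]

lemma vmin_le (x : Fin d → ℝ) (i : Fin d) : vmin x ≤ x i :=
  ciInf_le (Finite.bddBelow_range x) i

lemma le_vmin {x : Fin d → ℝ} {c : ℝ} (h : ∀ i, c ≤ x i) : c ≤ vmin x :=
  le_ciInf h

lemma vmin_eq (x : Fin d → ℝ) : ∃ i, vmin x = x i := by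
  obtain ⟨i, hi⟩ := Finite.exists_min x
  exact ⟨i, le_antisymm (vmin_le x i) (le_vmin hi)⟩

lemma vmin_mul {x : Fin d → ℝ} {c : ℝ} (hc : 0 ≤ c) :
    vmin (fun i => c * x i) = c * vmin x := by
  obtain ⟨i, hi⟩ := vmin_eq x
  refine le_antisymm ((vmin_le _ i).trans ?_) (le_vmin fun j => ?_)
  · rw [hi]
  · exact mul_le_mul_of_nonneg_left (vmin_le x j) hc

lemma mulVec_point (A : Matrix (Fin d) (Fin d) ℝ) (v w : Fin d → ℝ) (t : ℝ) (i : Fin d) :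
    A.mulVec (fun j => v j + t * w j) i = A.mulVec v i + t * A.mulVec w i := by
  have h : (fun j => v j + t * w j) = v + t • w := by funext j; simp
  rw [h, Matrix.mulVec_add, Matrix.mulVec_smul]
  simp

lemma mulVec_scale (A : Matrix (Fin d) (Fin d) ℝ) (v : Fin d → ℝ) (t : ℝ) (i : Fin d) :
    A.mulVec (fun j => t * v j) i = t * A.mulVec v i := by
  have h : (fun j => t * v j) = t • v := by funext j; simp
  rw [h, Matrix.mulVec_smul]
  simp

/-- the "hit the boundary" lemma -/
lemma hit {v w : Fin d → ℝ} (hv : ∀ i, 0 < v i) (hw : ∃ j, w j < 0) :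
    ∃ t : ℝ, 0 < t ∧ (∀ i, 0 ≤ v i + t * w i) ∧ (∃ j, v j + t * w j = 0) ∧
      (∀ i, w i < 0 → t ≤ v i / (-w i)) := by
  obtain ⟨j0, hj0⟩ := hw
  have hs : (Finset.univ.filter (fun i => w i < 0)).Nonempty :=
    ⟨j0, by simp [hj0]⟩
  obtain ⟨j, hjs, hmin⟩ := Finset.exists_min_image _ (fun i => v i / (-w i)) hs
  have hwj : w j < 0 := by simpa using hjs
  have hnwj : 0 < -w j := neg_pos.2 hwj
  refine ⟨v j / (-w j), div_pos (hv j) hnwj, ?_, ⟨j, ?_⟩, ?_⟩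
  · intro i
    rcases lt_or_ge (w i) 0 with h | h
    · have hb : v j / (-w j) ≤ v i / (-w i) := hmin i (by simp [h])
      have hnwi : 0 < -w i := neg_pos.2 h
      rw [div_le_div_iff₀ hnwj hnwi] at hb
      have e : v j / (-w j) * (-w i) ≤ v i := by
        rw [div_mul_eq_mul_div, div_le_iff₀ hnwj]; linarith
      linarith
    · have : 0 ≤ v j / (-w j) * w i := mul_nonneg (div_pos (hv j) hnwj).le h
      nlinarith [hv i]
  · have : v j / (-w j) * (-w j) = v j := div_mul_cancel₀ _ hnwj.ne'
    nlinarith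
  · intro i hi
    exact hmin i (by simp [hi])

end Aux

/-- Lemma 2.2: if 0 < τ(A) < ∞ then
τ(A) = 1 / min((A⁻¹𝟙)⁺) = max_i (((Σ_j A⁻¹_{ij})⁺)⁻¹). -/
theorem tau_eq_inv_of_inv_one {d : ℕ} (hd : 0 < d) (A : Matrix (Fin d) (Fin d) ℝ)
    (h0 : 0 < tau A) (h1 : tau A < ⊤) :
    tau A = ENNReal.ofReal (1 / vmin (vpos (A⁻¹.mulVec (fun _ => 1)))) ∧
    tau A = ENNReal.ofReal (⨆ i : Fin d, (max (∑ j, A⁻¹ i j) 0)⁻¹) := by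
  haveI : NeZero d := ⟨hd.ne'⟩
  set f : (Fin d → ℝ) → ℝ := fun x => vmin (vpos (A.mulVec x)) with hf
  have htau : tau A = ⨆ x ∈ {x : Fin d → ℝ | (∀ i, 0 < x i) ∧ vmin x = 1},
      ENNReal.ofReal (f x) := rfl
  have hf0 : ∀ x, 0 ≤ f x := fun x => le_vmin (fun i => le_max_right _ _)
  -- positive minimum means all coordinates at least f x
  have hposA : ∀ x : Fin d → ℝ, 0 < f x → ∀ i, f x ≤ A.mulVec x i := by
    intro x hx i
    have h1' : f x ≤ max (A.mulVec x i) 0 := vmin_le (vpos (A.mulVec x)) i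
    rcases le_or_gt (A.mulVec x i) 0 with h | h
    · rw [max_eq_right h] at h1'; linarith
    · rwa [max_eq_left h.le] at h1'
  -- an element with positive value
  have hx0 : ∃ x : Fin d → ℝ, ((∀ i, 0 < x i) ∧ vmin x = 1) ∧ 0 < f x := by
    rw [htau, lt_iSup_iff] at h0
    obtain ⟨x, hx⟩ := h0
    rw [lt_iSup_iff] at hx
    obtain ⟨hxS, hx⟩ := hx
    exact ⟨x, hxS, ENNReal.ofReal_pos.mp hx⟩
  -- global bound
  set M := (tau A).toReal with hMdef
  have hM0 : 0 ≤ M := ENNReal.toReal_nonneg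
  have hMem : ∀ x : Fin d → ℝ, (∀ i, 0 < x i) → vmin x = 1 →
      ENNReal.ofReal (f x) ≤ tau A := by
    intro x hp hm
    rw [htau]
    exact le_iSup₂ (f := fun x (_ : x ∈ {x : Fin d → ℝ | (∀ i, 0 < x i) ∧ vmin x = 1}) =>
      ENNReal.ofReal (f x)) x ⟨hp, hm⟩
  have hM : ∀ x : Fin d → ℝ, (∀ i, 0 < x i) → vmin x = 1 → f x ≤ M := by
    intro x hp hm
    exact (ENNReal.ofReal_le_iff_le_toReal h1.ne).mp (hMem x hp hm)
  obtain ⟨x0, ⟨hx0pos, hx0min⟩, hfx0⟩ := hx0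
  -- normalize to get x1 with A x1 ≥ 1
  set x1 : Fin d → ℝ := fun i => (f x0)⁻¹ * x0 i with hx1def
  have hx1pos : ∀ i, 0 < x1 i := fun i => mul_pos (inv_pos.2 hfx0) (hx0pos i)
  have hx1A : ∀ i, 1 ≤ A.mulVec x1 i := by
    intro i
    rw [hx1def, mulVec_scale]
    have := hposA x0 hfx0 i
    rw [← inv_mul_cancel₀ hfx0.ne']
    exact mul_le_mul_of_nonneg_left this (inv_pos.2 hfx0).le
  -- Key lemma K: no nonnegative vector with a zero coordinate has A u ≥ 1
  have K : ∀ u : Fin d → ℝ, (∀ i, 0 ≤ u i) → (∃ j, u j = 0) →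
      ¬(∀ i, 1 ≤ A.mulVec u i) := by
    rintro u hu ⟨j, hj⟩ hAu
    set c := x1 j with hcdef
    have hc : 0 < c := hx1pos j
    set lam := M * c with hlamdef
    have hlam0 : 0 ≤ lam := mul_nonneg hM0 hc.le
    set xl : Fin d → ℝ := fun i => x1 i + lam * u i with hxldef
    have hxlpos : ∀ i, 0 < xl i := fun i =>
      add_pos_of_pos_of_nonneg (hx1pos i) (mul_nonneg hlam0 (hu i))
    have hxlA : ∀ i, 1 + lam ≤ A.mulVec xl i := by
      intro i
      rw [hxldef, mulVec_point]
      have h1' := hx1A i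
      have h2 : lam * 1 ≤ lam * A.mulVec u i :=
        mul_le_mul_of_nonneg_left (hAu i) hlam0
      linarith
    have hvm : 0 < vmin xl := by
      obtain ⟨i0, hi0⟩ := vmin_eq xl
      rw [hi0]; exact hxlpos i0
    have hvmc : vmin xl ≤ c := by
      have := vmin_le xl j
      simpa [hxldef, hj] using this
    set v : Fin d → ℝ := fun i => (vmin xl)⁻¹ * xl i with hvdef
    have hvpos : ∀ i, 0 < v i := fun i => mul_pos (inv_pos.2 hvm) (hxlpos i)
    have hvmin : vmin v = 1 := by
      rw [hvdef, vmin_mul (inv_pos.2 hvm).le, inv_mul_cancel₀ hvm.ne']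
    have hfv : (1 + lam) / c ≤ f v := by
      apply le_vmin
      intro i
      have hAv : A.mulVec v i = (vmin xl)⁻¹ * A.mulVec xl i := by
        rw [hvdef, mulVec_scale]
      have hinv : c⁻¹ ≤ (vmin xl)⁻¹ := inv_anti₀ hvm hvmc
      have hAxl0 : (0:ℝ) ≤ A.mulVec xl i := le_trans (by linarith) (hxlA i)
      have hmm : (1 + lam) * c⁻¹ ≤ A.mulVec xl i * (vmin xl)⁻¹ :=
        mul_le_mul (hxlA i) hinv (inv_pos.2 hc).le hAxl0
      have h1' : (1 + lam) / c ≤ A.mulVec v i := by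
        rw [hAv, div_eq_mul_inv, mul_comm ((vmin xl)⁻¹)]
        exact hmm
      exact h1'.trans (le_max_left _ _)
    have hcon := hM v hvpos hvmin
    have : (1 + lam) / c ≤ M := hfv.trans hcon
    rw [div_le_iff₀ hc] at this
    rw [hlamdef] at this
    nlinarith
  -- A is invertible
  have hker : ∀ z : Fin d → ℝ, A.mulVec z = 0 → z = 0 := by
    intro z hz
    by_contra hzne
    obtain ⟨k, hk⟩ := Function.ne_iff.mp hzne
    have hw : ∃ w : Fin d → ℝ, A.mulVec w = 0 ∧ ∃ j, w j < 0 := by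
      rcases lt_or_gt_of_ne hk with h | h
      · exact ⟨z, hz, k, h⟩
      · refine ⟨-z, by rw [Matrix.mulVec_neg, hz, neg_zero], k, ?_⟩
        simpa using h
    obtain ⟨w, hwA, hwneg⟩ := hw
    obtain ⟨t, ht, hnn, ⟨j, hj⟩, _⟩ := hit hx1pos hwneg
    refine K (fun i => x1 i + t * w i) hnn ⟨j, hj⟩ ?_
    intro i
    rw [mulVec_point]
    have : A.mulVec w i = 0 := by rw [hwA]; rfl
    rw [this]
    have := hx1A i
    linarith
  have hdet : IsUnit A.det := by
    rw [isUnit_iff_ne_zero]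
    intro hdet0
    obtain ⟨v, hv0, hv⟩ := Matrix.exists_mulVec_eq_zero_iff.mpr hdet0
    exact hv0 (hker v hv)
  have hAinv : A * A⁻¹ = 1 := Matrix.mul_nonsing_inv A hdet
  set y : Fin d → ℝ := A⁻¹.mulVec (fun _ => 1) with hydef
  have hAy : ∀ i, A.mulVec y i = 1 := by
    have : A.mulVec y = (fun _ => 1) := by
      rw [hydef, Matrix.mulVec_mulVec, hAinv, Matrix.one_mulVec]
    intro i; rw [this]
  -- y is strictly positive
  have hypos : ∀ i, 0 < y i := by
    by_contra h
    push_neg at h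
    obtain ⟨i0, hi0⟩ := h
    have hwneg : y i0 - x1 i0 < 0 := by linarith [hx1pos i0]
    obtain ⟨t, ht, hnn, ⟨j, hj⟩, hbd⟩ := hit (w := fun i => y i - x1 i) hx1pos ⟨i0, hwneg⟩
    have ht1 : t ≤ 1 := by
      have h2 := hbd i0 hwneg
      rw [neg_sub] at h2
      have h3 : x1 i0 / (x1 i0 - y i0) ≤ 1 := by
        rw [div_le_one (by linarith [hx1pos i0])]
        linarith
      linarith
    refine K (fun i => x1 i + t * (y i - x1 i)) hnn ⟨j, hj⟩ ?_
    intro i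
    rw [mulVec_point]
    have hsub : A.mulVec (fun i => y i - x1 i) i = A.mulVec y i - A.mulVec x1 i := by
      have : (fun i => y i - x1 i) = y - x1 := by funext i; simp
      rw [this, Matrix.mulVec_sub]; rfl
    rw [hsub, hAy i]
    have h4 := hx1A i
    nlinarith
  -- minimality of y over C'
  have hminy : ∀ x : Fin d → ℝ, (∀ i, 0 < x i) → (∀ i, 1 ≤ A.mulVec x i) →
      ∀ i, y i ≤ x i := by
    intro x hxpos hxA
    by_contra h
    push_neg at h
    obtain ⟨i0, hi0⟩ := h
    have hwneg : x i0 - y i0 < 0 := by linarith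
    obtain ⟨t, ht, hnn, ⟨j, hj⟩, _⟩ := hit (w := fun i => x i - y i) hypos ⟨i0, hwneg⟩
    refine K (fun i => y i + t * (x i - y i)) hnn ⟨j, hj⟩ ?_
    intro i
    rw [mulVec_point]
    have hsub : A.mulVec (fun i => x i - y i) i = A.mulVec x i - A.mulVec y i := by
      have : (fun i => x i - y i) = x - y := by funext i; simp
      rw [this, Matrix.mulVec_sub]; rfl
    rw [hsub, hAy i]
    have h4 := hxA i
    nlinarith
  -- the minimum of y
  set m := vmin y with hmdef
  obtain ⟨i0m, hi0m⟩ := vmin_eq y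
  have hm : 0 < m := by rw [hmdef, hi0m]; exact hypos i0m
  -- first equality
  have hle : tau A ≤ ENNReal.ofReal (1 / m) := by
    rw [htau]
    apply iSup₂_le
    intro x hx
    obtain ⟨hxpos, hxmin⟩ := hx
    apply ENNReal.ofReal_le_ofReal
    rcases le_or_gt (f x) 0 with h | h
    · exact h.trans (by positivity)
    · set x' : Fin d → ℝ := fun i => (f x)⁻¹ * x i with hx'def
      have hx'pos : ∀ i, 0 < x' i := fun i => mul_pos (inv_pos.2 h) (hxpos i)
      have hx'A : ∀ i, 1 ≤ A.mulVec x' i := by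
        intro i
        rw [hx'def, mulVec_scale]
        rw [← inv_mul_cancel₀ h.ne']
        exact mul_le_mul_of_nonneg_left (hposA x h i) (inv_pos.2 h).le
      have hyx : ∀ i, y i ≤ x' i := hminy x' hx'pos hx'A
      have hmx : m ≤ (f x)⁻¹ := by
        have : m ≤ vmin x' := le_vmin fun i => (vmin_le y i).trans (hyx i)
        rwa [hx'def, vmin_mul (inv_pos.2 h).le, hxmin, mul_one] at this
      have h2 : f x * m ≤ f x * (f x)⁻¹ := mul_le_mul_of_nonneg_left hmx h.le
      rw [mul_inv_cancel₀ h.ne'] at h2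
      rw [le_div_iff₀ hm]
      linarith
  have hge : ENNReal.ofReal (1 / m) ≤ tau A := by
    set xs : Fin d → ℝ := fun i => m⁻¹ * y i with hxsdef
    have hxspos : ∀ i, 0 < xs i := fun i => mul_pos (inv_pos.2 hm) (hypos i)
    have hxsmin : vmin xs = 1 := by
      rw [hxsdef, vmin_mul (inv_pos.2 hm).le, ← hmdef, inv_mul_cancel₀ hm.ne']
    have hfxs : 1 / m ≤ f xs := by
      apply le_vmin
      intro i
      have : A.mulVec xs i = m⁻¹ := by
        rw [hxsdef, mulVec_scale, hAy i, mul_one]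
      refine le_trans ?_ (le_max_left _ _)
      rw [this, one_div]
    calc ENNReal.ofReal (1 / m) ≤ ENNReal.ofReal (f xs) := ENNReal.ofReal_le_ofReal hfxs
      _ ≤ tau A := hMem xs hxspos hxsmin
  have eq1 : tau A = ENNReal.ofReal (1 / m) := le_antisymm hle hge
  -- rewrite vmin (vpos y) = m
  have hvposy : vpos y = y := by
    funext i
    exact max_eq_left (hypos i).le
  have hyrow : ∀ i, y i = ∑ j, A⁻¹ i j := by
    intro i
    simp [hydef, Matrix.mulVec, dotProduct]
  have eq2 : (⨆ i : Fin d, (max (∑ j, A⁻¹ i j) 0)⁻¹) = 1 / m := by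
    have heach : ∀ i, (max (∑ j, A⁻¹ i j) 0)⁻¹ = (y i)⁻¹ := by
      intro i
      rw [← hyrow, max_eq_left (hypos i).le]
    rw [one_div]
    apply le_antisymm
    · apply ciSup_le
      intro i
      rw [heach i]
      exact inv_anti₀ hm (vmin_le y i)
    · refine le_trans ?_ (le_ciSup (Finite.bddAbove_range _) i0m)
      rw [heach i0m, ← hi0m, ← hmdef]
  constructor
  · rw [eq1, hvposy]
  · rw [eq1, eq2]
end

section
/- Let Δ be a d-dimensional diagonal matrix with strictly positive diagonal entries δ_1,...,δ_d. Then τ(Δ) = max{δ_1,...,δ_d}, where τ(A) := sup_{x ∈ S^d} min((Ax)^+) and S^d = {x ∈ (0,∞)^d : min(x)=1}. -/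
open scoped ENNReal

/-- Example 2.3: for a diagonal matrix with strictly positive diagonal entries δ,
τ(Δ) = max_i δ_i. -/
theorem tau_diagonal {d : ℕ} (hd : 0 < d) (δ : Fin d → ℝ) (hδ : ∀ i, 0 < δ i) :
    tau (Matrix.diagonal δ) = ENNReal.ofReal (⨆ i, δ i) := by
  have hne : Nonempty (Fin d) := ⟨⟨0, hd⟩⟩
  set M := ⨆ i, δ i with hM
  obtain ⟨k, hk⟩ := Finite.exists_max δ
  have hMk : M = δ k := le_antisymm (ciSup_le hk) (le_ciSup (Finite.bddAbove_range δ) k)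
  have hMpos : 0 < M := hMk ▸ hδ k
  apply le_antisymm
  · apply iSup₂_le
    rintro x ⟨hx, hmin⟩
    obtain ⟨j, hj⟩ := Finite.exists_min x
    have hxj : x j = 1 := by
      rw [← hmin, vmin]
      exact le_antisymm (le_ciInf hj) (ciInf_le (Finite.bddBelow_range x) j)
    apply ENNReal.ofReal_le_ofReal
    calc vmin (vpos ((Matrix.diagonal δ).mulVec x))
        ≤ vpos ((Matrix.diagonal δ).mulVec x) j :=
          ciInf_le (Finite.bddBelow_range _) j
      _ = max (δ j * x j) 0 := by simp [vpos, Matrix.mulVec_diagonal]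
      _ = δ j := by rw [hxj, mul_one, max_eq_left (hδ j).le]
      _ ≤ M := le_ciSup (Finite.bddAbove_range δ) j
  · set x : Fin d → ℝ := fun i => M / δ i with hxdef
    have hx : ∀ i, 0 < x i := fun i => div_pos hMpos (hδ i)
    have hxk : x k = 1 := by simp [hxdef, ← hMk, div_self hMpos.ne']
    have hx1 : ∀ i, 1 ≤ x i := fun i =>
      (one_le_div (hδ i)).2 (le_ciSup (Finite.bddAbove_range δ) i)
    have hmin : vmin x = 1 := by
      rw [vmin]
      refine le_antisymm ?_ (le_ciInf hx1)
      calc ⨅ i, x i ≤ x k := ciInf_le (Finite.bddBelow_range x) k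
        _ = 1 := hxk
    have hval : vmin (vpos ((Matrix.diagonal δ).mulVec x)) = M := by
      have : ∀ i, vpos ((Matrix.diagonal δ).mulVec x) i = M := by
        intro i
        simp [vpos, Matrix.mulVec_diagonal, hxdef, mul_div_cancel₀ _ (hδ i).ne',
          max_eq_left hMpos.le]
      rw [vmin]
      simp [this]
    calc ENNReal.ofReal M
        = ENNReal.ofReal (vmin (vpos ((Matrix.diagonal δ).mulVec x))) := by rw [hval]
      _ ≤ tau (Matrix.diagonal δ) := le_iSup₂_of_le x ⟨hx, hmin⟩ le_rfl
end

section
/- Let X, Y ≥ 0 be independent random variables, each regularly varying with index −1, and let α, β satisfy 0 ≤ β < min{1, α}. Then lim_{x→∞} P(X > x, Y^α X^β > x) / (P(X > x) · P(Y^α > x^{1−β})) = α/(α−β). -/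
open MeasureTheory ProbabilityTheory Filter Topology
open scoped ENNReal

section Helpers
open Set

private lemma tail_pos (T : ℝ → ℝ) (hT : Antitone T) (h0 : ∀ x, 0 ≤ T x)
    (L : ℝ) (hL : L ≠ 0)
    (hrv : Tendsto (fun x => T (2*x)/T x) atTop (nhds L)) : ∀ x, 0 < T x := by
  intro x
  rcases (h0 x).lt_or_eq with h | h
  · exact h
  exfalso
  have hz : ∀ y ≥ x, T y = 0 := fun y hy => le_antisymm (h ▸ hT hy) (h0 y)
  have hev : (fun x => T (2*x)/T x) =ᶠ[atTop] fun _ => (0:ℝ) := by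
    filter_upwards [eventually_ge_atTop (max x 0)] with y hy
    rw [hz y (le_trans (le_max_left _ _) hy), div_zero]
  exact hL (tendsto_nhds_unique (hrv.congr' hev) tendsto_const_nhds)

private lemma potter (T : ℝ → ℝ) (hT : Antitone T) (hpos : ∀ x, 0 < T x)
    (ρ : ℝ) (hρ : 0 < ρ)
    (hrv : ∀ s : ℝ, 1 < s → Tendsto (fun x => T (s*x)/T x) atTop (nhds (s ^ (-ρ))))
    (ε δ : ℝ) (hε : 0 < ε) (hερ : ε < ρ) (hδ : 0 < δ) :
    ∃ x₀ : ℝ, 1 ≤ x₀ ∧ ∀ x ≥ x₀, ∀ u ≥ (1:ℝ),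
      T (x*u) ≤ (1+δ) * u ^ (-(ρ-ε)) * T x ∧
      (1+δ)⁻¹ * u ^ (-(ρ+ε)) * T x ≤ T (x*u) := by
  have h1δ : (1:ℝ) < 1 + δ := by linarith
  have h1δ0 : (0:ℝ) < 1 + δ := by linarith
  have hρε : (0:ℝ) < ρ + ε := by linarith
  set s : ℝ := (1+δ) ^ (ρ+ε)⁻¹ with hs_def
  have hs0 : (0:ℝ) < s := Real.rpow_pos_of_pos h1δ0 _
  have hs1 : (1:ℝ) < s :=
    Real.one_lt_rpow_iff_of_pos h1δ0 |>.mpr (Or.inl ⟨h1δ, by positivity⟩)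
  have hsρε : s ^ (ρ+ε) = 1 + δ := by
    rw [hs_def, ← Real.rpow_mul (le_of_lt h1δ0), inv_mul_cancel₀ (ne_of_gt hρε),
      Real.rpow_one]
  have hsρε' : s ^ (ρ-ε) ≤ 1 + δ := by
    rw [← hsρε]
    exact Real.rpow_le_rpow_of_exponent_le (le_of_lt hs1) (by linarith)
  -- eventual sandwich at scale s
  have hlt1 : s ^ (-(ρ+ε)) < s ^ (-ρ) :=
    Real.rpow_lt_rpow_left_iff hs1 |>.mpr (by linarith)
  have hlt2 : s ^ (-ρ) < s ^ (-(ρ-ε)) :=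
    Real.rpow_lt_rpow_left_iff hs1 |>.mpr (by linarith)
  have hev : ∀ᶠ x in atTop,
      s ^ (-(ρ+ε)) ≤ T (s*x)/T x ∧ T (s*x)/T x ≤ s ^ (-(ρ-ε)) := by
    filter_upwards [(hrv s hs1).eventually_const_lt hlt1,
      (hrv s hs1).eventually_lt_const hlt2] with y h1 h2
    exact ⟨le_of_lt h1, le_of_lt h2⟩
  obtain ⟨x₁, hx₁⟩ := eventually_atTop.mp hev
  refine ⟨max x₁ 1, le_max_right _ _, ?_⟩
  intro x hx u hu
  have hx1 : (1:ℝ) ≤ x := le_trans (le_max_right _ _) hx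
  have hxpos : (0:ℝ) < x := lt_of_lt_of_le zero_lt_one hx1
  have hx₁' : ∀ y ≥ x, s ^ (-(ρ+ε)) * T y ≤ T (s*y) ∧ T (s*y) ≤ s ^ (-(ρ-ε)) * T y := by
    intro y hy
    have hy₁ : y ≥ x₁ := le_trans (le_trans (le_max_left _ _) hx) hy
    obtain ⟨h1, h2⟩ := hx₁ y hy₁
    constructor
    · rw [← le_div_iff₀ (hpos y)]; exact h1
    · rw [← div_le_iff₀ (hpos y)]; exact h2
  -- induction
  have key : ∀ k : ℕ,
      s ^ (-(ρ+ε)*k) * T x ≤ T (s ^ (k:ℝ) * x) ∧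
      T (s ^ (k:ℝ) * x) ≤ s ^ (-(ρ-ε)*k) * T x := by
    intro k
    induction k with
    | zero => simp
    | succ k ih =>
      have hsk1 : (1:ℝ) ≤ s ^ (k:ℝ) :=
        Real.one_le_rpow (le_of_lt hs1) (by positivity)
      have hy : s ^ (k:ℝ) * x ≥ x := le_mul_of_one_le_left (le_of_lt hxpos) hsk1 |>.trans_eq (rfl)
      obtain ⟨hl, hr⟩ := hx₁' (s ^ (k:ℝ) * x) hy
      have heq : s ^ ((k:ℝ)+1) * x = s * (s ^ (k:ℝ) * x) := by
        rw [Real.rpow_add hs0, Real.rpow_one]; ring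
      push_cast
      constructor
      · calc s ^ (-(ρ+ε)*((k:ℝ)+1)) * T x
            = s ^ (-(ρ+ε)) * (s ^ (-(ρ+ε)*(k:ℝ)) * T x) := by
              rw [← mul_assoc, ← Real.rpow_add hs0]; congr 2; ring
          _ ≤ s ^ (-(ρ+ε)) * T (s ^ (k:ℝ) * x) := by
              apply mul_le_mul_of_nonneg_left ih.1 (le_of_lt (Real.rpow_pos_of_pos hs0 _))
          _ ≤ T (s * (s ^ (k:ℝ) * x)) := hl
          _ = T (s ^ ((k:ℝ)+1) * x) := by rw [heq]
      · calc T (s ^ ((k:ℝ)+1) * x) = T (s * (s ^ (k:ℝ) * x)) := by rw [heq]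
          _ ≤ s ^ (-(ρ-ε)) * T (s ^ (k:ℝ) * x) := hr
          _ ≤ s ^ (-(ρ-ε)) * (s ^ (-(ρ-ε)*(k:ℝ)) * T x) := by
              apply mul_le_mul_of_nonneg_left ih.2 (le_of_lt (Real.rpow_pos_of_pos hs0 _))
          _ = s ^ (-(ρ-ε)*((k:ℝ)+1)) * T x := by
              rw [← mul_assoc, ← Real.rpow_add hs0]; congr 2; ring
  -- floor
  have hu0 : (0:ℝ) < u := lt_of_lt_of_le zero_lt_one hu
  set k : ℕ := ⌊Real.logb s u⌋₊ with hk_def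
  have hlogb : (0:ℝ) ≤ Real.logb s u := Real.logb_nonneg hs1 hu
  have hk1 : s ^ (k:ℝ) ≤ u := by
    calc s ^ (k:ℝ) ≤ s ^ (Real.logb s u) :=
          Real.rpow_le_rpow_of_exponent_le (le_of_lt hs1) (Nat.floor_le hlogb)
      _ = u := Real.rpow_logb hs0 (ne_of_gt hs1) hu0
  have hk2 : u ≤ s ^ ((k:ℝ)+1) := by
    calc u = s ^ (Real.logb s u) := (Real.rpow_logb hs0 (ne_of_gt hs1) hu0).symm
      _ ≤ s ^ ((k:ℝ)+1) := Real.rpow_le_rpow_of_exponent_le (le_of_lt hs1)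
          (le_of_lt (Nat.lt_floor_add_one _))
  have hsk_pos : (0:ℝ) < s ^ (k:ℝ) := Real.rpow_pos_of_pos hs0 _
  constructor
  · -- upper bound
    calc T (x*u) ≤ T (s ^ (k:ℝ) * x) := by
          apply hT
          rw [mul_comm (s ^ (k:ℝ)) x]
          exact mul_le_mul_of_nonneg_left hk1 (le_of_lt hxpos)
      _ ≤ s ^ (-(ρ-ε)*k) * T x := (key k).2
      _ ≤ (1+δ) * u ^ (-(ρ-ε)) * T x := by
          apply mul_le_mul_of_nonneg_right _ (le_of_lt (hpos x))
          have h1 : (s ^ ((k:ℝ)+1)) ^ (-(ρ-ε)) ≤ u ^ (-(ρ-ε)) :=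
            Real.rpow_le_rpow_of_nonpos hu0 hk2 (by linarith)
          calc s ^ (-(ρ-ε)*(k:ℝ)) = s ^ (ρ-ε) * (s ^ ((k:ℝ)+1)) ^ (-(ρ-ε)) := by
                rw [← Real.rpow_mul (le_of_lt hs0), ← Real.rpow_add hs0]
                congr 1; ring
            _ ≤ (1+δ) * u ^ (-(ρ-ε)) := by
                apply mul_le_mul hsρε' h1 (le_of_lt (Real.rpow_pos_of_pos (Real.rpow_pos_of_pos hs0 _) _)) (by linarith)
  · -- lower bound
    calc (1+δ)⁻¹ * u ^ (-(ρ+ε)) * T x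
        ≤ s ^ (-(ρ+ε)*((k:ℝ)+1)) * T x := by
          apply mul_le_mul_of_nonneg_right _ (le_of_lt (hpos x))
          have h1 : u ^ (-(ρ+ε)) ≤ (s ^ (k:ℝ)) ^ (-(ρ+ε)) :=
            Real.rpow_le_rpow_of_nonpos hsk_pos hk1 (by linarith)
          calc (1+δ)⁻¹ * u ^ (-(ρ+ε)) ≤ (1+δ)⁻¹ * (s ^ (k:ℝ)) ^ (-(ρ+ε)) := by
                apply mul_le_mul_of_nonneg_left h1 (by positivity)
            _ = s ^ (-(ρ+ε)*((k:ℝ)+1)) := by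
                rw [← hsρε, ← Real.rpow_neg (le_of_lt hs0), ← Real.rpow_mul (le_of_lt hs0),
                  ← Real.rpow_add hs0]
                congr 1; ring
      _ ≤ T (s ^ ((k:ℝ)+1) * x) := by
          have := (key (k+1)).1
          push_cast at this
          exact this
      _ ≤ T (x*u) := by
          apply hT
          rw [mul_comm (s ^ ((k:ℝ)+1)) x]
          exact mul_le_mul_of_nonneg_left hk2 (le_of_lt hxpos)


private lemma tail_Ici (ν : Measure ℝ) [IsProbabilityMeasure ν]
    (ρ : ℝ) (hρ : 0 < ρ)
    (hrv : ∀ s : ℝ, 0 < s → Tendsto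
      (fun τ => (ν (Ioi (s*τ))).toReal / (ν (Ioi τ)).toReal) atTop (nhds (s ^ (-ρ))))
    (hpos : ∀ τ, 0 < (ν (Ioi τ)).toReal) :
    Tendsto (fun τ => (ν (Ici τ)).toReal / (ν (Ioi τ)).toReal) atTop (nhds 1) := by
  rw [Metric.tendsto_atTop]
  intro ε hε
  have hb : (1:ℝ) < 1 + ε/2 := by linarith
  have hb0 : (0:ℝ) < 1 + ε/2 := by linarith
  set s : ℝ := (1 + ε/2) ^ (-ρ⁻¹) with hs_def
  have hs0 : 0 < s := Real.rpow_pos_of_pos hb0 _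
  have hs1 : s < 1 := Real.rpow_lt_one_of_one_lt_of_neg hb (by simp [hρ.le]; positivity)
  have hsρ : s ^ (-ρ) = 1 + ε/2 := by
    rw [hs_def, ← Real.rpow_mul hb0.le]
    rw [show -ρ⁻¹ * -ρ = ρ⁻¹ * ρ by ring, inv_mul_cancel₀ hρ.ne', Real.rpow_one]
  have hev := (hrv s hs0).eventually_lt_const (show s ^ (-ρ) < 1 + ε by rw [hsρ]; linarith)
  obtain ⟨N, hN⟩ := eventually_atTop.mp hev
  refine ⟨max N 1, fun τ hτ => ?_⟩
  have hτ1 : (1:ℝ) ≤ τ := le_trans (le_max_right _ _) hτ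
  have hτ0 : (0:ℝ) < τ := lt_of_lt_of_le zero_lt_one hτ1
  have h1 : (1:ℝ) ≤ (ν (Ici τ)).toReal / (ν (Ioi τ)).toReal := by
    rw [le_div_iff₀ (hpos τ), one_mul]
    exact ENNReal.toReal_le_toReal (measure_ne_top _ _) (measure_ne_top _ _) |>.mpr
      (measure_mono Ioi_subset_Ici_self)
  have hsub : Ici τ ⊆ Ioi (s*τ) := by
    intro a ha
    have : s * τ < 1 * τ := mul_lt_mul_of_pos_right hs1 hτ0
    simp only [one_mul] at this
    exact lt_of_lt_of_le this ha
  have h2 : (ν (Ici τ)).toReal / (ν (Ioi τ)).toReal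
      ≤ (ν (Ioi (s*τ))).toReal / (ν (Ioi τ)).toReal := by
    apply div_le_div_of_nonneg_right ?_ (hpos τ).le
    exact ENNReal.toReal_le_toReal (measure_ne_top _ _) (measure_ne_top _ _) |>.mpr
      (measure_mono hsub)
  have h3 : (ν (Ioi (s*τ))).toReal / (ν (Ioi τ)).toReal < 1 + ε :=
    hN τ (le_trans (le_max_left _ _) hτ)
  rw [Real.dist_eq, abs_lt]
  constructor <;> nlinarith [h1, h2, h3]

set_option maxHeartbeats 2000000 in
private lemma karamata (ν : Measure ℝ) [IsProbabilityMeasure ν]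
    (ρ p : ℝ) (hρ : 0 < ρ) (hp : ρ < p)
    (hrv : ∀ s : ℝ, 0 < s → Tendsto
      (fun τ => (ν (Ioi (s*τ))).toReal / (ν (Ioi τ)).toReal) atTop (nhds (s ^ (-ρ))))
    (hpos : ∀ τ, 0 < (ν (Ioi τ)).toReal) :
    Tendsto (fun τ => (∫ z, Set.indicator (Set.Ioo 0 τ) (fun z => (z/τ) ^ p) z ∂ν)
        / (ν (Ioi τ)).toReal)
      atTop (nhds (ρ/(p-ρ))) := by
  have hp0 : 0 < p := hρ.trans hp
  set G : ℝ → ℝ := fun t => (ν (Ioi t)).toReal with hG_def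
  have hGanti : Antitone G := fun a b hab =>
    ENNReal.toReal_le_toReal (measure_ne_top _ _) (measure_ne_top _ _) |>.mpr
      (measure_mono (Ioi_subset_Ioi hab))
  have hGle1 : ∀ t, G t ≤ 1 := by
    intro t
    have h := ENNReal.toReal_le_toReal (measure_ne_top ν (Ioi t)) (measure_ne_top ν univ)
      |>.mpr (measure_mono (subset_univ _))
    simpa [measure_univ] using h
  -- Step 1 : layer cake representation
  have step1 : ∀ τ : ℝ, 0 < τ →
      (∫ z, Set.indicator (Set.Ioo 0 τ) (fun z => (z/τ) ^ p) z ∂ν)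
        = ∫ t in Set.Ioo (0:ℝ) 1, (ν (Set.Ioo (τ * t ^ p⁻¹) τ)).toReal := by
    intro τ hτ
    have hnn : ∀ z, 0 ≤ Set.indicator (Set.Ioo 0 τ) (fun z : ℝ => (z/τ) ^ p) z :=
      fun z => Set.indicator_nonneg
        (fun w hw => Real.rpow_nonneg (div_nonneg hw.1.le hτ.le) p) z
    have hle1 : ∀ z, Set.indicator (Set.Ioo 0 τ) (fun z : ℝ => (z/τ) ^ p) z ≤ 1 := by
      intro z
      by_cases hz : z ∈ Set.Ioo 0 τ
      · rw [Set.indicator_of_mem hz]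
        exact Real.rpow_le_one (div_nonneg hz.1.le hτ.le) ((div_le_one hτ).mpr hz.2.le) hp0.le
      · rw [Set.indicator_of_notMem hz]; exact zero_le_one
    have hmeas : Measurable (Set.indicator (Set.Ioo 0 τ) (fun z : ℝ => (z/τ) ^ p)) :=
      (((Real.continuous_rpow_const hp0.le).measurable).comp
        (measurable_id.div_const τ)).indicator measurableSet_Ioo
    have hint : Integrable (Set.indicator (Set.Ioo 0 τ) (fun z : ℝ => (z/τ) ^ p)) ν := by
      refine (integrable_const (1:ℝ)).mono' hmeas.aestronglyMeasurable ?_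
      refine Filter.Eventually.of_forall fun z => ?_
      rw [Real.norm_eq_abs, abs_of_nonneg (hnn z)]
      exact hle1 z
    rw [hint.integral_eq_integral_meas_lt (Filter.Eventually.of_forall hnn)]
    have hseteq : ∀ t ∈ Set.Ioi (0:ℝ),
        (ν {a | t < Set.indicator (Set.Ioo 0 τ) (fun z : ℝ => (z/τ) ^ p) a}).toReal
          = Set.indicator (Set.Ioo (0:ℝ) 1)
              (fun t => (ν (Set.Ioo (τ * t ^ p⁻¹) τ)).toReal) t := by
      intro t ht
      rw [Set.mem_Ioi] at ht
      by_cases ht1 : t < 1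
      · rw [Set.indicator_of_mem (Set.mem_Ioo.mpr ⟨ht, ht1⟩)]
        congr 2
        ext a
        simp only [Set.mem_setOf_eq, Set.mem_Ioo]
        constructor
        · intro h
          by_cases ha : a ∈ Set.Ioo 0 τ
          · rw [Set.indicator_of_mem ha] at h
            have h1 : t ^ p⁻¹ < a/τ := by
              have h2 := Real.rpow_lt_rpow ht.le h (inv_pos.mpr hp0)
              rwa [← Real.rpow_mul (div_nonneg ha.1.le hτ.le), mul_inv_cancel₀ hp0.ne',
                Real.rpow_one] at h2
            refine ⟨?_, ha.2⟩
            rw [mul_comm]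
            exact (lt_div_iff₀ hτ).mp h1
          · rw [Set.indicator_of_notMem ha] at h
            exact absurd h (not_lt.mpr ht.le)
        · rintro ⟨h1, h2⟩
          have htp : (0:ℝ) < t ^ p⁻¹ := Real.rpow_pos_of_pos ht _
          have ha0 : 0 < a := lt_trans (by positivity) h1
          rw [Set.indicator_of_mem (Set.mem_Ioo.mpr ⟨ha0, h2⟩)]
          have h3 : t ^ p⁻¹ < a / τ := by
            rw [lt_div_iff₀ hτ, mul_comm]
            exact h1
          have h4 := Real.rpow_lt_rpow (Real.rpow_nonneg ht.le _) h3 hp0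
          rwa [← Real.rpow_mul ht.le, inv_mul_cancel₀ hp0.ne', Real.rpow_one] at h4
      · have hempty : {a | t < Set.indicator (Set.Ioo 0 τ) (fun z : ℝ => (z/τ) ^ p) a} = ∅ := by
          ext a
          simp only [Set.mem_setOf_eq, Set.mem_empty_iff_false, iff_false, not_lt]
          exact le_trans (hle1 a) (not_lt.mp ht1)
        rw [hempty, measure_empty, ENNReal.toReal_zero,
          Set.indicator_of_notMem (fun hmem => ht1 hmem.2)]
    simp only [measureReal_def]
    rw [setIntegral_congr_fun measurableSet_Ioi hseteq,
      integral_indicator measurableSet_Ioo, Measure.restrict_restrict measurableSet_Ioo,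
      Set.inter_eq_left.mpr (fun t (ht : t ∈ Set.Ioo (0:ℝ) 1) => Set.mem_Ioi.mpr ht.1)]
  -- Potter bounds for G
  set ε' : ℝ := min ((p-ρ)/2) (ρ/2) with hε'_def
  have hε'0 : 0 < ε' := lt_min (by linarith) (by linarith)
  have hε'ρ : ε' < ρ := lt_of_le_of_lt (min_le_right _ _) (by linarith)
  have hε'p : ρ + ε' < p := by
    have := min_le_left ((p-ρ)/2) (ρ/2)
    have h2 : ε' ≤ (p-ρ)/2 := this
    linarith
  obtain ⟨x₀, hx₀1, hpot⟩ := potter G hGanti hpos ρ hρ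
    (fun s hs => hrv s (lt_trans zero_lt_one hs)) ε' 1 hε'0 hε'ρ one_pos
  have hx₀0 : (0:ℝ) < x₀ := lt_of_lt_of_le zero_lt_one hx₀1
  have hGx₀ : 0 < G x₀ := hpos x₀
  set e : ℝ := -((ρ+ε')/p) with he_def
  have he1 : (-1:ℝ) < e := by
    rw [he_def, neg_lt, neg_neg]
    rw [div_lt_one hp0]
    exact hε'p
  have he0 : e < 0 := by
    rw [he_def, neg_lt_zero]
    positivity
  set C : ℝ := 2 / G x₀ with hC_def
  have hC2 : (2:ℝ) ≤ C := by
    rw [hC_def, le_div_iff₀ hGx₀]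
    nlinarith [hGle1 x₀]
  have hC0 : (0:ℝ) < C := by positivity
  -- the dominating function
  have hbound_int : Integrable (fun t : ℝ => C * t ^ e) (volume.restrict (Set.Ioo (0:ℝ) 1)) := by
    apply Integrable.const_mul
    have h1 : IntervalIntegrable (fun t : ℝ => t ^ e) volume 0 1 :=
      intervalIntegral.intervalIntegrable_rpow' he1
    have h2 : IntegrableOn (fun t : ℝ => t ^ e) (Set.Ioc (0:ℝ) 1) volume :=
      (intervalIntegrable_iff_integrableOn_Ioc_of_le zero_le_one).mp h1
    exact h2.mono_set Set.Ioo_subset_Ioc_self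
  -- measurability of the integrands
  have hmeasΦ : ∀ τ : ℝ, Measurable fun t : ℝ =>
      (ν (Set.Ioo (τ * t ^ p⁻¹) τ)).toReal / G τ := by
    intro τ
    have h1 : Antitone fun a : ℝ => (ν (Set.Ioo a τ)).toReal := fun a b hab =>
      ENNReal.toReal_le_toReal (measure_ne_top _ _) (measure_ne_top _ _) |>.mpr
        (measure_mono (fun z hz => ⟨lt_of_le_of_lt hab hz.1, hz.2⟩))
    exact (h1.measurable.comp
      (((Real.continuous_rpow_const (inv_pos.mpr hp0).le).measurable).const_mul τ)).div_const _
  -- a.e. pointwise limit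
  have hlim : ∀ t ∈ Set.Ioo (0:ℝ) 1, Tendsto
      (fun τ => (ν (Set.Ioo (τ * t ^ p⁻¹) τ)).toReal / G τ) atTop
      (nhds (t ^ (-(ρ/p)) - 1)) := by
    intro t ht
    obtain ⟨ht0, ht1⟩ := ht
    have htp0 : (0:ℝ) < t ^ p⁻¹ := Real.rpow_pos_of_pos ht0 _
    have htp1 : t ^ p⁻¹ < 1 := Real.rpow_lt_one ht0.le ht1 (inv_pos.mpr hp0)
    have hdecomp : ∀ᶠ τ in atTop,
        (ν (Set.Ioo (τ * t ^ p⁻¹) τ)).toReal / G τ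
          = G (t ^ p⁻¹ * τ) / G τ - (ν (Set.Ici τ)).toReal / G τ := by
      filter_upwards [eventually_gt_atTop (0:ℝ)] with τ hτ0
      have ha : τ * t ^ p⁻¹ < τ := by
        nlinarith
      have hunion : Set.Ioi (τ * t ^ p⁻¹) = Set.Ioo (τ * t ^ p⁻¹) τ ∪ Set.Ici τ := by
        ext z
        simp only [Set.mem_Ioi, Set.mem_union, Set.mem_Ioo, Set.mem_Ici]
        constructor
        · intro h
          rcases lt_or_ge z τ with h2 | h2
          · exact Or.inl ⟨h, h2⟩
          · exact Or.inr h2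
        · rintro (⟨h, _⟩ | h)
          · exact h
          · exact lt_of_lt_of_le ha h
      have hdisj : Disjoint (Set.Ioo (τ * t ^ p⁻¹) τ) (Set.Ici τ) := by
        rw [Set.disjoint_left]
        rintro z ⟨_, hz2⟩ hz3
        exact absurd hz3 (not_le.mpr hz2)
      have hmeasadd : ν (Set.Ioi (τ * t ^ p⁻¹))
          = ν (Set.Ioo (τ * t ^ p⁻¹) τ) + ν (Set.Ici τ) := by
        rw [hunion, measure_union hdisj measurableSet_Ici]
      have htoReal : G (τ * t ^ p⁻¹)
          = (ν (Set.Ioo (τ * t ^ p⁻¹) τ)).toReal + (ν (Set.Ici τ)).toReal := by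
        rw [hG_def]
        simp only
        rw [hmeasadd, ENNReal.toReal_add (measure_ne_top _ _) (measure_ne_top _ _)]
      rw [mul_comm (t ^ p⁻¹) τ, htoReal]
      ring
    have h1 : Tendsto (fun τ => G (t ^ p⁻¹ * τ) / G τ) atTop (nhds ((t ^ p⁻¹) ^ (-ρ))) :=
      hrv (t ^ p⁻¹) htp0
    have h2 : Tendsto (fun τ => (ν (Set.Ici τ)).toReal / G τ) atTop (nhds 1) :=
      tail_Ici ν ρ hρ hrv hpos
    have h3 := h1.sub h2
    have h4 : (t ^ p⁻¹) ^ (-ρ) = t ^ (-(ρ/p)) := by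
      rw [← Real.rpow_mul ht0.le]
      congr 1
      field_simp
    rw [h4] at h3
    exact Tendsto.congr' (by filter_upwards [hdecomp] with τ h using h.symm) h3
  -- Dominated convergence
  have hdom : ∀ᶠ τ in atTop, ∀ᵐ t ∂(volume.restrict (Set.Ioo (0:ℝ) 1)),
      ‖(ν (Set.Ioo (τ * t ^ p⁻¹) τ)).toReal / G τ‖ ≤ C * t ^ e := by
    filter_upwards [eventually_ge_atTop (max x₀ 1)] with τ hτ
    have hτx₀ : x₀ ≤ τ := le_trans (le_max_left _ _) hτ
    have hτ1 : (1:ℝ) ≤ τ := le_trans (le_max_right _ _) hτ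
    have hτ0 : (0:ℝ) < τ := lt_of_lt_of_le zero_lt_one hτ1
    rw [ae_restrict_iff' measurableSet_Ioo]
    refine Filter.Eventually.of_forall fun t ht => ?_
    obtain ⟨ht0, ht1⟩ := ht
    have htp0 : (0:ℝ) < t ^ p⁻¹ := Real.rpow_pos_of_pos ht0 _
    have hte0 : (0:ℝ) < t ^ e := Real.rpow_pos_of_pos ht0 _
    have htme0 : (0:ℝ) < t ^ (-e) := Real.rpow_pos_of_pos ht0 _
    have htee : t ^ e * t ^ (-e) = 1 := by
      rw [← Real.rpow_add ht0]
      simp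
    have hΦnn : 0 ≤ (ν (Set.Ioo (τ * t ^ p⁻¹) τ)).toReal / G τ :=
      div_nonneg ENNReal.toReal_nonneg (hpos τ).le
    rw [Real.norm_eq_abs, abs_of_nonneg hΦnn, div_le_iff₀ (hpos τ)]
    have hnum : (ν (Set.Ioo (τ * t ^ p⁻¹) τ)).toReal ≤ G (τ * t ^ p⁻¹) :=
      ENNReal.toReal_le_toReal (measure_ne_top _ _) (measure_ne_top _ _) |>.mpr
        (measure_mono (fun z hz => hz.1))
    by_cases hcase : x₀ ≤ τ * t ^ p⁻¹
    · -- Potter applies at base τ * t ^ p⁻¹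
      have hu1 : (1:ℝ) ≤ t ^ (-p⁻¹) :=
        Real.one_le_rpow_of_pos_of_le_one_of_nonpos ht0 ht1.le
          (neg_nonpos.mpr (inv_pos.mpr hp0).le)
      have hxu : τ * t ^ p⁻¹ * t ^ (-p⁻¹) = τ := by
        rw [mul_assoc, ← Real.rpow_add ht0]
        simp
      have hkey := (hpot (τ * t ^ p⁻¹) hcase (t ^ (-p⁻¹)) hu1).2
      rw [hxu] at hkey
      have hup : (t ^ (-p⁻¹)) ^ (-(ρ+ε')) = t ^ (-e) := by
        rw [← Real.rpow_mul ht0.le]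
        congr 1
        rw [he_def]
        field_simp
      rw [hup] at hkey
      -- hkey : (1+1)⁻¹ * t ^ (-e) * G (τ * t ^ p⁻¹) ≤ G τ
      have hGa0 : 0 ≤ G (τ * t ^ p⁻¹) := ENNReal.toReal_nonneg
      calc (ν (Set.Ioo (τ * t ^ p⁻¹) τ)).toReal ≤ G (τ * t ^ p⁻¹) := hnum
        _ ≤ G (τ * t ^ p⁻¹) / G x₀ := by
            rw [le_div_iff₀ hGx₀]
            nlinarith [hGle1 x₀]
        _ ≤ C * t ^ e * G τ := by
            rw [hC_def]
            have h5 : 2 / G x₀ * t ^ e * G τ ≥ 2 / G x₀ * t ^ e *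
                ((1+1)⁻¹ * t ^ (-e) * G (τ * t ^ p⁻¹)) := by
              apply mul_le_mul_of_nonneg_left hkey
              positivity
            calc G (τ * t ^ p⁻¹) / G x₀
                = 2 / G x₀ * t ^ e * ((1+1)⁻¹ * t ^ (-e) * G (τ * t ^ p⁻¹)) := by
                  have h7 : 2 / G x₀ * t ^ e * ((1+1)⁻¹ * t ^ (-e) * G (τ * t ^ p⁻¹))
                      = t ^ e * t ^ (-e) * G (τ * t ^ p⁻¹) / G x₀ := by ring
                  rw [h7, htee, one_mul]
              _ ≤ 2 / G x₀ * t ^ e * G τ := h5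
    · -- small base : use Potter at x₀ with u = τ / x₀
      push_neg at hcase
      have hu1 : (1:ℝ) ≤ τ / x₀ := (one_le_div hx₀0).mpr hτx₀
      have hxu : x₀ * (τ / x₀) = τ := by field_simp
      have hkey := (hpot x₀ (le_refl x₀) (τ / x₀) hu1).2
      rw [hxu] at hkey
      -- hkey : (1+1)⁻¹ * (τ/x₀) ^ (-(ρ+ε')) * G x₀ ≤ G τ
      set D : ℝ := (τ/x₀) ^ (ρ+ε') with hD_def
      set D' : ℝ := (τ/x₀) ^ (-(ρ+ε')) with hD'_def
      have hτx₀0 : (0:ℝ) < τ / x₀ := by positivity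
      have hD0 : 0 < D := Real.rpow_pos_of_pos hτx₀0 _
      have hD'0 : 0 < D' := Real.rpow_pos_of_pos hτx₀0 _
      have hDD' : D * D' = 1 := by
        rw [hD_def, hD'_def, ← Real.rpow_add hτx₀0, add_neg_cancel, Real.rpow_zero]
      have hDle : D ≤ t ^ e := by
        have h6 : τ / x₀ ≤ t ^ (-p⁻¹) := by
          rw [div_le_iff₀ hx₀0]
          have h7 : τ * t ^ p⁻¹ * t ^ (-p⁻¹) ≤ x₀ * t ^ (-p⁻¹) := by
            apply mul_le_mul_of_nonneg_right hcase.le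
            positivity
          rwa [mul_assoc, ← Real.rpow_add ht0, add_neg_cancel, Real.rpow_zero, mul_one,
            mul_comm x₀] at h7
        calc D ≤ (t ^ (-p⁻¹)) ^ (ρ+ε') :=
              Real.rpow_le_rpow hτx₀0.le h6 (by positivity)
          _ = t ^ e := by
              rw [← Real.rpow_mul ht0.le]
              congr 1
              rw [he_def]
              field_simp
      calc (ν (Set.Ioo (τ * t ^ p⁻¹) τ)).toReal ≤ G (τ * t ^ p⁻¹) := hnum
        _ ≤ 1 := hGle1 _
        _ ≤ C * t ^ e * G τ := by
            have h8 : C * t ^ e * G τ ≥ C * t ^ e * ((1+1)⁻¹ * D' * G x₀) := by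
              apply mul_le_mul_of_nonneg_left hkey
              positivity
            have h9 : C * t ^ e * ((1+1)⁻¹ * D' * G x₀) ≥ 1 := by
              rw [hC_def]
              have h10 : 2 / G x₀ * t ^ e * ((1+1)⁻¹ * D' * G x₀) = t ^ e * D' := by
                field_simp
                ring
              rw [h10]
              nlinarith [hDD', hD'0, hDle]
            linarith
  -- value of the limit integral
  have hval : ∫ t in Set.Ioo (0:ℝ) 1, (t ^ (-(ρ/p)) - 1) = ρ/(p-ρ) := by
    have hr1 : (-1:ℝ) < -(ρ/p) := by
      rw [neg_lt_neg_iff, div_lt_one hp0]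
      exact hp
    rw [← integral_Ioc_eq_integral_Ioo, ← intervalIntegral.integral_of_le zero_le_one]
    rw [intervalIntegral.integral_sub (intervalIntegral.intervalIntegrable_rpow' hr1)
      intervalIntegrable_const]
    have hgt : (0:ℝ) < -(ρ/p) + 1 := by
      have := (div_lt_one hp0).mpr hp
      linarith
    have hpρ0 : (0:ℝ) < p - ρ := by linarith
    have hpρ : p - ρ ≠ 0 := ne_of_gt hpρ0
    have h11 : -(ρ/p) + 1 = (p-ρ)/p := by field_simp; ring
    rw [integral_rpow (Or.inl hr1), intervalIntegral.integral_const, smul_eq_mul,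
      Real.one_rpow, Real.zero_rpow (ne_of_gt hgt), h11]
    rw [show ((1:ℝ)-0)/((p-ρ)/p) - (1-0)*1 = p/(p-ρ) - 1 by rw [sub_zero, one_div_div]; ring,
      div_sub_one hpρ]
    congr 1
    ring
  -- dominated convergence
  have hdct := tendsto_integral_filter_of_dominated_convergence
    (μ := volume.restrict (Set.Ioo (0:ℝ) 1))
    (F := fun τ => fun t : ℝ => (ν (Set.Ioo (τ * t ^ p⁻¹) τ)).toReal / G τ)
    (f := fun t : ℝ => t ^ (-(ρ/p)) - 1)
    (bound := fun t : ℝ => C * t ^ e)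
    (Filter.Eventually.of_forall fun τ => (hmeasΦ τ).aestronglyMeasurable)
    hdom hbound_int
    (by
      rw [ae_restrict_iff' measurableSet_Ioo]
      exact Filter.Eventually.of_forall fun t ht => hlim t ht)
  rw [hval] at hdct
  refine Tendsto.congr' ?_ hdct
  filter_upwards [eventually_gt_atTop (0:ℝ)] with τ hτ
  rw [step1 τ hτ, ← integral_div]


private lemma prob_toReal_le_one {μ : Measure ℝ} [IsProbabilityMeasure μ] (s : Set ℝ) :
    (μ s).toReal ≤ 1 := by
  have h := ENNReal.toReal_le_toReal (measure_ne_top μ s) (measure_ne_top μ univ)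
    |>.mpr (measure_mono (subset_univ _))
  simpa [measure_univ] using h

private lemma prod_section_eq (μ ν : Measure ℝ) [IsProbabilityMeasure μ]
    [IsProbabilityMeasure ν] (x τ r : ℝ) (hτ : 0 < τ) (hr : 0 ≤ r) :
    ((μ.prod ν) {p : ℝ × ℝ | 0 < p.2 ∧ p.2 < τ ∧ x * (τ/p.2) ^ r < p.1}).toReal
      = ∫ z, Set.indicator (Set.Ioo 0 τ)
          (fun z => (μ (Set.Ioi (x * (τ/z) ^ r))).toReal) z ∂ν := by
  have hgmeas : Measurable fun z : ℝ => x * (τ/z) ^ r :=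
    (((Real.continuous_rpow_const hr).measurable).comp
      (measurable_const.div measurable_id)).const_mul x
  have hSmeas : MeasurableSet {p : ℝ × ℝ | 0 < p.2 ∧ p.2 < τ ∧ x * (τ/p.2) ^ r < p.1} := by
    apply MeasurableSet.inter
    · exact measurable_snd measurableSet_Ioi
    apply MeasurableSet.inter
    · exact measurable_snd measurableSet_Iio
    · exact measurableSet_lt (hgmeas.comp measurable_snd) measurable_fst
  have hsec : ∀ z : ℝ,
      μ ((fun t => (t, z)) ⁻¹' {p : ℝ × ℝ | 0 < p.2 ∧ p.2 < τ ∧ x * (τ/p.2) ^ r < p.1})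
      = Set.indicator (Set.Ioo 0 τ) (fun z => μ (Set.Ioi (x * (τ/z) ^ r))) z := by
    intro z
    by_cases hz : z ∈ Set.Ioo 0 τ
    · rw [Set.indicator_of_mem hz]
      congr 1
      ext t
      simp only [Set.mem_preimage, Set.mem_setOf_eq, Set.mem_Ioi]
      exact ⟨fun h => h.2.2, fun h => ⟨hz.1, hz.2, h⟩⟩
    · rw [Set.indicator_of_notMem hz]
      convert measure_empty (μ := μ)
      ext t
      simp only [Set.mem_preimage, Set.mem_setOf_eq, Set.mem_empty_iff_false, iff_false,
        not_and]
      intro h1 h2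
      exact absurd (Set.mem_Ioo.mpr ⟨h1, h2⟩) hz
  rw [Measure.prod_apply_symm hSmeas, lintegral_congr hsec]
  have hofreal : ∀ z : ℝ, Set.indicator (Set.Ioo 0 τ)
        (fun z => μ (Set.Ioi (x * (τ/z) ^ r))) z
      = ENNReal.ofReal (Set.indicator (Set.Ioo 0 τ)
        (fun z => (μ (Set.Ioi (x * (τ/z) ^ r))).toReal) z) := by
    intro z
    by_cases hz : z ∈ Set.Ioo 0 τ
    · rw [Set.indicator_of_mem hz, Set.indicator_of_mem hz,
        ENNReal.ofReal_toReal (measure_ne_top _ _)]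
    · rw [Set.indicator_of_notMem hz, Set.indicator_of_notMem hz, ENNReal.ofReal_zero]
  rw [lintegral_congr hofreal]
  have hmeas2 : Measurable fun z : ℝ => (μ (Set.Ioi (x * (τ/z) ^ r))).toReal := by
    have h1 : Antitone fun c : ℝ => (μ (Set.Ioi c)).toReal := fun a b hab =>
      ENNReal.toReal_le_toReal (measure_ne_top _ _) (measure_ne_top _ _) |>.mpr
        (measure_mono (Set.Ioi_subset_Ioi hab))
    exact h1.measurable.comp hgmeas
  have hind_nn : ∀ z : ℝ, 0 ≤ Set.indicator (Set.Ioo 0 τ)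
      (fun z => (μ (Set.Ioi (x * (τ/z) ^ r))).toReal) z :=
    fun z => Set.indicator_nonneg (fun _ _ => ENNReal.toReal_nonneg) z
  have hint : Integrable (Set.indicator (Set.Ioo 0 τ)
      (fun z => (μ (Set.Ioi (x * (τ/z) ^ r))).toReal)) ν := by
    refine (integrable_const (1:ℝ)).mono'
      ((hmeas2.indicator measurableSet_Ioo).aestronglyMeasurable) ?_
    refine Filter.Eventually.of_forall fun z => ?_
    rw [Real.norm_eq_abs, abs_of_nonneg (hind_nn z)]
    by_cases hz : z ∈ Set.Ioo 0 τ
    · rw [Set.indicator_of_mem hz]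
      exact prob_toReal_le_one _
    · rw [Set.indicator_of_notMem hz]; exact zero_le_one
  rw [← MeasureTheory.ofReal_integral_eq_lintegral_ofReal hint
    (Filter.Eventually.of_forall hind_nn),
    ENNReal.toReal_ofReal (integral_nonneg hind_nn)]

private lemma integrable_indicator_bdd (ν : Measure ℝ) [IsProbabilityMeasure ν]
    {s : Set ℝ} (hs : MeasurableSet s) {g : ℝ → ℝ} (hg : Measurable g) (M : ℝ)
    (h0 : ∀ z ∈ s, 0 ≤ g z) (hM : ∀ z ∈ s, g z ≤ M) :
    Integrable (Set.indicator s g) ν := by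
  refine (integrable_const (max M 0)).mono' ((hg.indicator hs).aestronglyMeasurable) ?_
  refine Filter.Eventually.of_forall fun z => ?_
  rw [Real.norm_eq_abs]
  by_cases hz : z ∈ s
  · rw [Set.indicator_of_mem hz, abs_of_nonneg (h0 z hz)]
    exact le_max_of_le_left (hM z hz)
  · rw [Set.indicator_of_notMem hz, abs_zero]
    exact le_max_right _ _

private lemma indicator_const_mul_integral (ν : Measure ℝ) (s : Set ℝ) (c : ℝ) (g : ℝ → ℝ) :
    ∫ z, Set.indicator s (fun z => c * g z) z ∂ν = c * ∫ z, Set.indicator s g z ∂ν := by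
  rw [← integral_const_mul]
  congr 1
  funext z
  by_cases hz : z ∈ s
  · rw [Set.indicator_of_mem hz, Set.indicator_of_mem hz]
  · rw [Set.indicator_of_notMem hz, Set.indicator_of_notMem hz, mul_zero]

end Helpers

/-- X is regularly varying with index -1: P(X > sx)/P(X > x) → s⁻¹ for all s > 0. -/
def RegVarNegOne {Ω : Type*} [MeasurableSpace Ω] (P : Measure Ω) (X : Ω → ℝ) : Prop :=
  ∀ s : ℝ, 0 < s →
    Tendsto (fun x : ℝ => (P {ω | s * x < X ω}).toReal / (P {ω | x < X ω}).toReal)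
      atTop (nhds s⁻¹)

set_option maxHeartbeats 2000000 in
/-- Lemma 6.1, equation (6.6): for independent nonnegative X, Y regularly varying with
index -1 and 0 ≤ β < min{1, α},
P(X > x, Y^α X^β > x)/(P(X > x)·P(Y^α > x^{1-β})) → α/(α-β). -/
theorem product_tail_limit {Ω : Type*} [MeasurableSpace Ω] (P : Measure Ω)
    [IsProbabilityMeasure P] (X Y : Ω → ℝ)
    (hXmeas : Measurable X) (hYmeas : Measurable Y)
    (hX0 : ∀ ω, 0 ≤ X ω) (hY0 : ∀ ω, 0 ≤ Y ω)
    (hindep : IndepFun X Y P)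
    (hXrv : RegVarNegOne P X) (hYrv : RegVarNegOne P Y)
    (α β : ℝ) (hβ0 : 0 ≤ β) (hβ : β < min 1 α) :
    Tendsto (fun x : ℝ =>
        (P {ω | x < X ω ∧ x < Y ω ^ α * X ω ^ β}).toReal /
        ((P {ω | x < X ω}).toReal * (P {ω | x ^ (1 - β) < Y ω ^ α}).toReal))
      atTop (nhds (α / (α - β))) := by
  have hβ1 : β < 1 := lt_of_lt_of_le hβ (min_le_left _ _)
  have hβα : β < α := lt_of_lt_of_le hβ (min_le_right _ _)
  have hα : 0 < α := lt_of_le_of_lt hβ0 hβα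
  -- tail function of X
  have hTXanti : Antitone (fun c : ℝ => (P {ω | c < X ω}).toReal) := fun a b hab =>
    ENNReal.toReal_le_toReal (measure_ne_top _ _) (measure_ne_top _ _) |>.mpr
      (measure_mono (fun ω (h : b < X ω) => lt_of_le_of_lt hab h))
  have hTXrv : ∀ s : ℝ, 1 < s → Tendsto
      (fun x => (P {ω | s*x < X ω}).toReal / (P {ω | x < X ω}).toReal) atTop
      (nhds (s ^ (-(1:ℝ)))) := by
    intro s hs
    have h := hXrv s (lt_trans zero_lt_one hs)
    rwa [← Real.rpow_neg_one s] at h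
  have hTXpos : ∀ c : ℝ, 0 < (P {ω | c < X ω}).toReal :=
    tail_pos _ hTXanti (fun c => ENNReal.toReal_nonneg) 2⁻¹ (by norm_num) (hXrv 2 two_pos)
  -- Z = Y^α and its law ν
  have hZmeas : Measurable (fun ω => Y ω ^ α) :=
    (Real.continuous_rpow_const hα.le).measurable.comp hYmeas
  set ν : Measure ℝ := P.map (fun ω => Y ω ^ α) with hν_def
  haveI : IsProbabilityMeasure ν := Measure.isProbabilityMeasure_map hZmeas.aemeasurable
  have hν_Ioi : ∀ t : ℝ, ν (Set.Ioi t) = P {ω | t < Y ω ^ α} := fun t => by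
    rw [hν_def, Measure.map_apply hZmeas measurableSet_Ioi]; rfl
  have hν_Ici : ∀ t : ℝ, ν (Set.Ici t) = P {ω | t ≤ Y ω ^ α} := fun t => by
    rw [hν_def, Measure.map_apply hZmeas measurableSet_Ici]; rfl
  have hZset : ∀ t : ℝ, 0 < t → {ω | t < Y ω ^ α} = {ω | t ^ α⁻¹ < Y ω} := by
    intro t ht
    ext ω
    simp only [Set.mem_setOf_eq]
    constructor
    · intro h
      have h2 := Real.rpow_lt_rpow ht.le h (inv_pos.mpr hα)
      rwa [← Real.rpow_mul (hY0 ω), mul_inv_cancel₀ hα.ne', Real.rpow_one] at h2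
    · intro h
      have h2 := Real.rpow_lt_rpow (Real.rpow_nonneg ht.le _) h hα
      rwa [← Real.rpow_mul ht.le, inv_mul_cancel₀ hα.ne', Real.rpow_one] at h2
  have hGrv : ∀ s : ℝ, 0 < s → Tendsto
      (fun τ => (ν (Set.Ioi (s*τ))).toReal / (ν (Set.Ioi τ)).toReal) atTop
      (nhds (s ^ (-α⁻¹))) := by
    intro s hs
    have hcomp := (hYrv (s ^ α⁻¹) (Real.rpow_pos_of_pos hs _)).comp
      (tendsto_rpow_atTop (inv_pos.mpr hα))
    have hval : ((s:ℝ) ^ α⁻¹)⁻¹ = s ^ (-α⁻¹) := (Real.rpow_neg hs.le _).symm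
    rw [hval] at hcomp
    apply Tendsto.congr' _ hcomp
    filter_upwards [eventually_gt_atTop (0:ℝ)] with τ hτ0
    have hsτ : 0 < s * τ := mul_pos hs hτ0
    simp only [Function.comp]
    rw [hν_Ioi, hν_Ioi, hZset _ hsτ, hZset _ hτ0, Real.mul_rpow hs.le hτ0.le]
  have hGanti : Antitone fun t : ℝ => (ν (Set.Ioi t)).toReal := fun a b hab =>
    ENNReal.toReal_le_toReal (measure_ne_top _ _) (measure_ne_top _ _) |>.mpr
      (measure_mono (Set.Ioi_subset_Ioi hab))
  have hGpos : ∀ t : ℝ, 0 < (ν (Set.Ioi t)).toReal := by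
    apply tail_pos _ hGanti (fun _ => ENNReal.toReal_nonneg) ((2:ℝ) ^ (-α⁻¹))
      (ne_of_gt (Real.rpow_pos_of_pos two_pos _))
    exact hGrv 2 two_pos
  -- independence of X and Z
  have hindepXZ : IndepFun X (fun ω => Y ω ^ α) P :=
    hindep.comp measurable_id (Real.continuous_rpow_const hα.le).measurable
  rcases eq_or_lt_of_le hβ0 with hβz | hβpos
  · -- case β = 0
    have hβz' : β = 0 := hβz.symm
    subst hβz'
    have hre : α/(α-0) = 1 := by rw [sub_zero, div_self hα.ne']
    rw [hre]
    apply Tendsto.congr _ tendsto_const_nhds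
    intro x
    have hnum : P {ω | x < X ω ∧ x < Y ω ^ α * X ω ^ (0:ℝ)}
        = P {ω | x < X ω} * P {ω | x < Y ω ^ α} := by
      have h1 : {ω | x < X ω ∧ x < Y ω ^ α * X ω ^ (0:ℝ)}
          = X ⁻¹' Set.Ioi x ∩ (fun ω => Y ω ^ α) ⁻¹' Set.Ioi x := by
        ext ω
        simp [Real.rpow_zero]
      rw [h1,
        hindepXZ.measure_inter_preimage_eq_mul _ _ measurableSet_Ioi measurableSet_Ioi]
      rfl
    have hx1 : x ^ ((1:ℝ) - 0) = x := by rw [sub_zero, Real.rpow_one]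
    rw [hx1, hnum, ENNReal.toReal_mul]
    have hY' : 0 < (P {ω | x < Y ω ^ α}).toReal := by
      have := hGpos x
      rwa [hν_Ioi] at this
    exact (div_self (ne_of_gt (mul_pos (hTXpos x) hY'))).symm
  · -- case 0 < β
    set μX : Measure ℝ := P.map X with hμX_def
    haveI : IsProbabilityMeasure μX := Measure.isProbabilityMeasure_map hXmeas.aemeasurable
    have hμX_Ioi : ∀ c : ℝ, μX (Set.Ioi c) = P {ω | c < X ω} := fun c => by
      rw [hμX_def, Measure.map_apply hXmeas measurableSet_Ioi]; rfl
    have hmap : P.map (fun ω => (X ω, Y ω ^ α)) = μX.prod ν :=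
      (indepFun_iff_map_prod_eq_prod_map_map hXmeas.aemeasurable hZmeas.aemeasurable).mp
        hindepXZ
    -- the rpow identity for the section threshold
    have hid : ∀ x : ℝ, 0 < x → ∀ z : ℝ, 0 < z →
        x * ((x ^ (1-β))/z) ^ β⁻¹ = (x / z) ^ β⁻¹ := by
      intro x hx0 z hz0
      rw [Real.div_rpow (Real.rpow_nonneg hx0.le _) hz0.le, Real.div_rpow hx0.le hz0.le,
        ← mul_div_assoc]
      congr 1
      rw [← Real.rpow_mul hx0.le]
      nth_rewrite 1 [← Real.rpow_one x]
      rw [← Real.rpow_add hx0]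
      congr 1
      field_simp
      ring
    -- measurability of the section sets
    have hSmeas : ∀ x τ : ℝ, MeasurableSet
        {p : ℝ × ℝ | 0 < p.2 ∧ p.2 < τ ∧ x * (τ/p.2) ^ β⁻¹ < p.1} := by
      intro x τ
      have hgmeas : Measurable fun z : ℝ => x * (τ/z) ^ β⁻¹ :=
        (((Real.continuous_rpow_const (inv_pos.mpr hβpos).le).measurable).comp
          (measurable_const.div measurable_id)).const_mul x
      apply MeasurableSet.inter
      · exact measurable_snd measurableSet_Ioi
      apply MeasurableSet.inter
      · exact measurable_snd measurableSet_Iio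
      · exact measurableSet_lt (hgmeas.comp measurable_snd) measurable_fst
    -- splitting of the numerator
    have hsplit : ∀ x : ℝ, 1 ≤ x →
        (P {ω | x < X ω ∧ x < Y ω ^ α * X ω ^ β}).toReal
          = (P {ω | x < X ω}).toReal * (ν (Set.Ici (x ^ (1-β)))).toReal
            + ((μX.prod ν) {p : ℝ × ℝ | 0 < p.2 ∧ p.2 < x ^ (1-β) ∧
                x * ((x ^ (1-β))/p.2) ^ β⁻¹ < p.1}).toReal := by
      intro x hx1
      have hx0 : (0:ℝ) < x := lt_of_lt_of_le zero_lt_one hx1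
      have hτ0 : 0 < x ^ (1-β) := Real.rpow_pos_of_pos hx0 _
      have hτx : x ^ (1-β) * x ^ β = x := by
        rw [← Real.rpow_add hx0, sub_add_cancel, Real.rpow_one]
      have hiff : ∀ ω, (x < X ω ∧ x < Y ω ^ α * X ω ^ β) ↔
          ((x < X ω ∧ x ^ (1-β) ≤ Y ω ^ α) ∨ (0 < Y ω ^ α ∧ Y ω ^ α < x ^ (1-β) ∧
            x * ((x ^ (1-β))/(Y ω ^ α)) ^ β⁻¹ < X ω)) := by
        intro ω
        constructor
        · rintro ⟨h1, h2⟩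
          rcases le_or_gt (x ^ (1-β)) (Y ω ^ α) with hzc | hzc
          · exact Or.inl ⟨h1, hzc⟩
          · have hZpos : 0 < Y ω ^ α := by
              rcases (Real.rpow_nonneg (hY0 ω) α).lt_or_eq with h | h
              · exact h
              · exfalso
                rw [← h, zero_mul] at h2
                linarith
            refine Or.inr ⟨hZpos, hzc, ?_⟩
            have h3 : x / Y ω ^ α < X ω ^ β := by
              rw [div_lt_iff₀ hZpos, mul_comm]
              exact h2
            have h4 := Real.rpow_lt_rpow (div_nonneg hx0.le hZpos.le) h3 (inv_pos.mpr hβpos)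
            rw [← Real.rpow_mul (hX0 ω), mul_inv_cancel₀ hβpos.ne', Real.rpow_one] at h4
            rw [hid x hx0 _ hZpos]
            exact h4
        · rintro (⟨h1, h2⟩ | ⟨h1, h2, h3⟩)
          · refine ⟨h1, ?_⟩
            have hXβ : x ^ β < X ω ^ β := Real.rpow_lt_rpow hx0.le h1 hβpos
            have h5 : x ^ (1-β) * x ^ β < Y ω ^ α * X ω ^ β :=
              mul_lt_mul' h2 hXβ (Real.rpow_nonneg hx0.le β) (lt_of_lt_of_le hτ0 h2)
            rwa [hτx] at h5
          · have hτZ : (1:ℝ) ≤ x ^ (1-β) / Y ω ^ α := (one_le_div h1).mpr h2.le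
            have hu1 : (1:ℝ) ≤ (x ^ (1-β) / Y ω ^ α) ^ β⁻¹ :=
              Real.one_le_rpow hτZ (inv_pos.mpr hβpos).le
            have hxX : x < X ω := lt_of_le_of_lt (le_mul_of_one_le_right hx0.le hu1) h3
            refine ⟨hxX, ?_⟩
            have h4 : (x / Y ω ^ α) ^ β⁻¹ < X ω := by
              rw [← hid x hx0 _ h1]
              exact h3
            have h5 := Real.rpow_lt_rpow
              (Real.rpow_nonneg (div_nonneg hx0.le h1.le) _) h4 hβpos
            rw [← Real.rpow_mul (div_nonneg hx0.le h1.le), inv_mul_cancel₀ hβpos.ne',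
              Real.rpow_one] at h5
            have h6 := (div_lt_iff₀ h1).mp h5
            rwa [mul_comm] at h6
      have hEeq : {ω | x < X ω ∧ x < Y ω ^ α * X ω ^ β}
          = (X ⁻¹' Set.Ioi x ∩ (fun ω => Y ω ^ α) ⁻¹' Set.Ici (x ^ (1-β)))
            ∪ ((fun ω => (X ω, Y ω ^ α)) ⁻¹' {p : ℝ × ℝ | 0 < p.2 ∧ p.2 < x ^ (1-β) ∧
                x * ((x ^ (1-β))/p.2) ^ β⁻¹ < p.1}) := by
        ext ω
        rw [Set.mem_setOf_eq, hiff ω]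
        rfl
      have hBmeas' : MeasurableSet ((fun ω => (X ω, Y ω ^ α)) ⁻¹'
          {p : ℝ × ℝ | 0 < p.2 ∧ p.2 < x ^ (1-β) ∧ x * ((x ^ (1-β))/p.2) ^ β⁻¹ < p.1}) :=
        (hXmeas.prodMk hZmeas) (hSmeas x (x ^ (1-β)))
      have hdisj : Disjoint
          (X ⁻¹' Set.Ioi x ∩ (fun ω => Y ω ^ α) ⁻¹' Set.Ici (x ^ (1-β)))
          ((fun ω => (X ω, Y ω ^ α)) ⁻¹' {p : ℝ × ℝ | 0 < p.2 ∧ p.2 < x ^ (1-β) ∧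
            x * ((x ^ (1-β))/p.2) ^ β⁻¹ < p.1}) := by
        rw [Set.disjoint_left]
        rintro ω ⟨_, hω2⟩ hω3
        exact absurd hω3.2.1 (not_lt.mpr hω2)
      rw [hEeq, measure_union hdisj hBmeas',
        ENNReal.toReal_add (measure_ne_top _ _) (measure_ne_top _ _)]
      congr 1
      · rw [hindepXZ.measure_inter_preimage_eq_mul _ _ measurableSet_Ioi measurableSet_Ici,
          ENNReal.toReal_mul, hν_Ici]
        rfl
      · rw [← hmap, Measure.map_apply (hXmeas.prodMk hZmeas) (hSmeas x (x ^ (1-β)))]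
    -- final limit via order topology
    have hτtend : Tendsto (fun x : ℝ => x ^ (1-β)) atTop atTop :=
      tendsto_rpow_atTop (by linarith)
    have hconst : (0:ℝ) < 1/β - α⁻¹ := by
      have h1 : α⁻¹ < β⁻¹ := by
        rw [← one_div, ← one_div]
        exact one_div_lt_one_div_of_lt hβpos hβα
      rw [one_div]
      linarith
    have hαβ0 : (0:ℝ) < α - β := by linarith
    have hvv : 1 + α⁻¹/((1:ℝ)/β - α⁻¹) = α/(α-β) := by
      have hβ' : β ≠ 0 := hβpos.ne'
      have hα' : α ≠ 0 := hα.ne'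
      have hαβ' : α - β ≠ 0 := ne_of_gt hαβ0
      have hc' : (1:ℝ)/β - α⁻¹ ≠ 0 := ne_of_gt hconst
      field_simp
      try ring
    rw [tendsto_order]
    constructor
    · -- lower bound : b < L eventually below R x
      intro b hb
      -- choose ε
      have hC : ContinuousAt (fun ε : ℝ =>
          1 + (1+ε)⁻¹*(α⁻¹/((1+ε)/β - α⁻¹) - ε)) 0 := by
        have h1 : ContinuousAt (fun ε : ℝ => (1+ε)/β - α⁻¹) 0 := by fun_prop
        have h2 : ((fun ε : ℝ => (1+ε)/β - α⁻¹) 0) ≠ 0 := by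
          simp only [add_zero]
          exact ne_of_gt hconst
        have h3 : ContinuousAt (fun ε : ℝ => (1+ε)⁻¹) 0 := by
          apply ContinuousAt.inv₀ (by fun_prop)
          norm_num
        exact continuousAt_const.add (h3.mul
          ((continuousAt_const.div h1 h2).sub continuousAt_id))
      have htd : Tendsto (fun ε : ℝ => 1 + (1+ε)⁻¹*(α⁻¹/((1+ε)/β - α⁻¹) - ε))
          (nhdsWithin 0 (Set.Ioi 0)) (nhds (α/(α-β))) := by
        have h10 := hC.tendsto.mono_left (nhdsWithin_le_nhds (s := Set.Ioi (0:ℝ)))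
        rw [← hvv]
        convert h10 using 2
        norm_num
      have hev1 : ∀ᶠ ε in nhdsWithin (0:ℝ) (Set.Ioi 0),
          b < 1 + (1+ε)⁻¹*(α⁻¹/((1+ε)/β - α⁻¹) - ε) := htd.eventually_const_lt hb
      have hev2 : ∀ᶠ ε in nhdsWithin (0:ℝ) (Set.Ioi 0), ε ∈ Set.Ioo (0:ℝ) 1 :=
        Ioo_mem_nhdsGT_of_mem ⟨le_refl 0, one_pos⟩
      obtain ⟨ε, hεb, hεmem⟩ := (hev1.and hev2).exists
      have hε0 : (0:ℝ) < ε := hεmem.1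
      have hε1 : ε < 1 := hεmem.2
      have hε1' : (0:ℝ) < 1 + ε := by linarith
      have hq0 : (0:ℝ) ≤ (1+ε)/β := div_nonneg hε1'.le hβpos.le
      have hpm : α⁻¹ < (1+ε)/β := by
        have : (1:ℝ)/β ≤ (1+ε)/β := by
          apply div_le_div_of_nonneg_right ?_ hβpos.le
          linarith
        rw [one_div] at hconst this
        linarith
      obtain ⟨x₀, hx₀1, hpotX⟩ := potter _ hTXanti hTXpos 1 one_pos hTXrv ε ε hε0 hε1 hε0
      have hkar := (karamata ν α⁻¹ ((1+ε)/β) (inv_pos.mpr hα) hpm hGrv hGpos).comp hτtend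
      filter_upwards [eventually_ge_atTop (max x₀ 1),
        hkar.eventually_const_lt (sub_lt_self (α⁻¹/((1+ε)/β - α⁻¹)) hε0)] with x hx hkarx
      have hx₀x : x₀ ≤ x := le_trans (le_max_left _ _) hx
      have hx1 : (1:ℝ) ≤ x := le_trans (le_max_right _ _) hx
      have hx0 : (0:ℝ) < x := lt_of_lt_of_le zero_lt_one hx1
      have hτ0 : 0 < x ^ (1-β) := Real.rpow_pos_of_pos hx0 _
      -- pointwise Potter lower bound
      have hptw : ∀ z : ℝ, Set.indicator (Set.Ioo 0 (x ^ (1-β)))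
            (fun z => (1+ε)⁻¹ * (P {ω | x < X ω}).toReal * (z/(x ^ (1-β))) ^ ((1+ε)/β)) z
          ≤ Set.indicator (Set.Ioo 0 (x ^ (1-β)))
            (fun z => (μX (Set.Ioi (x * ((x ^ (1-β))/z) ^ β⁻¹))).toReal) z := by
        intro z
        by_cases hz : z ∈ Set.Ioo 0 (x ^ (1-β))
        · rw [Set.indicator_of_mem hz, Set.indicator_of_mem hz]
          have hz0 : (0:ℝ) < z := hz.1
          have hu1 : (1:ℝ) ≤ ((x ^ (1-β))/z) ^ β⁻¹ :=
            Real.one_le_rpow ((one_le_div hz0).mpr hz.2.le) (inv_pos.mpr hβpos).le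
          have hPot := (hpotX x hx₀x (((x ^ (1-β))/z) ^ β⁻¹) hu1).2
          have hexp : (((x ^ (1-β))/z) ^ β⁻¹) ^ (-(1+ε)) = (z/(x ^ (1-β))) ^ ((1+ε)/β) := by
            rw [← Real.rpow_mul (div_nonneg hτ0.le hz0.le),
              show z/(x ^ (1-β)) = ((x ^ (1-β))/z)⁻¹ by rw [inv_div],
              Real.inv_rpow (div_nonneg hτ0.le hz0.le),
              ← Real.rpow_neg (div_nonneg hτ0.le hz0.le)]
            congr 1
            field_simp
            try ring
          rw [hμX_Ioi]
          calc (1+ε)⁻¹ * (P {ω | x < X ω}).toReal * (z/(x ^ (1-β))) ^ ((1+ε)/β)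
              = (1+ε)⁻¹ * (((x ^ (1-β))/z) ^ β⁻¹) ^ (-(1+ε)) * (P {ω | x < X ω}).toReal := by
                rw [hexp]; ring
            _ ≤ (P {ω | x * ((x ^ (1-β))/z) ^ β⁻¹ < X ω}).toReal := hPot
        · rw [Set.indicator_of_notMem hz, Set.indicator_of_notMem hz]
      have hB_ge : (1+ε)⁻¹ * (P {ω | x < X ω}).toReal *
            (∫ z, Set.indicator (Set.Ioo 0 (x ^ (1-β)))
              (fun z => (z/(x ^ (1-β))) ^ ((1+ε)/β)) z ∂ν)
          ≤ ((μX.prod ν) {p : ℝ × ℝ | 0 < p.2 ∧ p.2 < x ^ (1-β) ∧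
              x * ((x ^ (1-β))/p.2) ^ β⁻¹ < p.1}).toReal := by
        rw [prod_section_eq μX ν x (x ^ (1-β)) β⁻¹ hτ0 (inv_pos.mpr hβpos).le,
          ← indicator_const_mul_integral]
        apply integral_mono ?_ ?_ hptw
        · apply integrable_indicator_bdd ν measurableSet_Ioo ?_
            ((1+ε)⁻¹ * (P {ω | x < X ω}).toReal)
          · intro z hz
            exact mul_nonneg (mul_nonneg (inv_nonneg.mpr hε1'.le) ENNReal.toReal_nonneg)
              (Real.rpow_nonneg (div_nonneg hz.1.le hτ0.le) _)
          · intro z hz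
            have h7 : (z/(x ^ (1-β))) ^ ((1+ε)/β) ≤ 1 :=
              Real.rpow_le_one (div_nonneg hz.1.le hτ0.le)
                ((div_le_one hτ0).mpr hz.2.le) hq0
            calc (1+ε)⁻¹ * (P {ω | x < X ω}).toReal * (z/(x ^ (1-β))) ^ ((1+ε)/β)
                ≤ (1+ε)⁻¹ * (P {ω | x < X ω}).toReal * 1 := by
                  apply mul_le_mul_of_nonneg_left h7
                  exact mul_nonneg (inv_nonneg.mpr hε1'.le) ENNReal.toReal_nonneg
              _ = (1+ε)⁻¹ * (P {ω | x < X ω}).toReal := mul_one _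
          · exact ((Real.continuous_rpow_const hq0).measurable.comp
              (measurable_id.div_const _)).const_mul _
        · apply integrable_indicator_bdd ν measurableSet_Ioo ?_ 1
          · intro z hz
            exact ENNReal.toReal_nonneg
          · intro z hz
            exact prob_toReal_le_one _
          · have h1 : Antitone fun c : ℝ => (μX (Set.Ioi c)).toReal := fun a b hab =>
              ENNReal.toReal_le_toReal (measure_ne_top _ _) (measure_ne_top _ _) |>.mpr
                (measure_mono (Set.Ioi_subset_Ioi hab))
            exact h1.measurable.comp
              ((((Real.continuous_rpow_const (inv_pos.mpr hβpos).le).measurable).comp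
                (measurable_const.div measurable_id)).const_mul x)
      -- assemble
      have hkarx' : (α⁻¹/((1+ε)/β - α⁻¹) - ε) * (ν (Set.Ioi (x ^ (1-β)))).toReal
          < ∫ z, Set.indicator (Set.Ioo 0 (x ^ (1-β)))
              (fun z => (z/(x ^ (1-β))) ^ ((1+ε)/β)) z ∂ν := by
        have h8 : (α⁻¹/((1+ε)/β - α⁻¹) - ε) < (∫ z, Set.indicator (Set.Ioo 0 (x ^ (1-β)))
            (fun z => (z/(x ^ (1-β))) ^ ((1+ε)/β)) z ∂ν) / (ν (Set.Ioi (x ^ (1-β)))).toReal :=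
          hkarx
        rwa [lt_div_iff₀ (hGpos _)] at h8
      have hAge : (ν (Set.Ioi (x ^ (1-β)))).toReal ≤ (ν (Set.Ici (x ^ (1-β)))).toReal :=
        ENNReal.toReal_le_toReal (measure_ne_top _ _) (measure_ne_top _ _) |>.mpr
          (measure_mono Set.Ioi_subset_Ici_self)
      have hGτ := hGpos (x ^ (1-β))
      have hTXx := hTXpos x
      have hν2 : (P {ω | x ^ (1-β) < Y ω ^ α}).toReal = (ν (Set.Ioi (x ^ (1-β)))).toReal := by
        rw [hν_Ioi]
      rw [hsplit x hx1, hν2, lt_div_iff₀ (mul_pos hTXx hGτ)]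
      have hEE0 : 0 ≤ ∫ z, Set.indicator (Set.Ioo 0 (x ^ (1-β)))
          (fun z => (z/(x ^ (1-β))) ^ ((1+ε)/β)) z ∂ν :=
        integral_nonneg (fun z => Set.indicator_nonneg
          (fun w hw => Real.rpow_nonneg (div_nonneg hw.1.le hτ0.le) _) z)
      have hb' : b * ((P {ω | x < X ω}).toReal * (ν (Set.Ioi (x ^ (1-β)))).toReal)
          < (1 + (1+ε)⁻¹*(α⁻¹/((1+ε)/β - α⁻¹) - ε)) *
            ((P {ω | x < X ω}).toReal * (ν (Set.Ioi (x ^ (1-β)))).toReal) :=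
        mul_lt_mul_of_pos_right hεb (mul_pos hTXx hGτ)
      have hmono1 := mul_le_mul_of_nonneg_left hkarx'.le
        (mul_nonneg (inv_nonneg.mpr hε1'.le) ENNReal.toReal_nonneg :
          (0:ℝ) ≤ (1+ε)⁻¹ * (P {ω | x < X ω}).toReal)
      nlinarith [hB_ge, hmono1, mul_le_mul_of_nonneg_left hAge hTXx.le]
    · -- upper bound : eventually R x < b for b > L
      intro b hb
      have hC : ContinuousAt (fun ε : ℝ =>
          (1+ε) + (1+ε)*(α⁻¹/((1-ε)/β - α⁻¹) + ε)) 0 := by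
        have h1 : ContinuousAt (fun ε : ℝ => (1-ε)/β - α⁻¹) 0 := by fun_prop
        have h2 : ((fun ε : ℝ => (1-ε)/β - α⁻¹) 0) ≠ 0 := by
          simp only [sub_zero]
          exact ne_of_gt hconst
        exact (continuousAt_const.add continuousAt_id).add
          ((continuousAt_const.add continuousAt_id).mul
            ((continuousAt_const.div h1 h2).add continuousAt_id))
      have htd : Tendsto (fun ε : ℝ => (1+ε) + (1+ε)*(α⁻¹/((1-ε)/β - α⁻¹) + ε))
          (nhdsWithin 0 (Set.Ioi 0)) (nhds (α/(α-β))) := by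
        have h10 := hC.tendsto.mono_left (nhdsWithin_le_nhds (s := Set.Ioi (0:ℝ)))
        rw [← hvv]
        convert h10 using 2
        norm_num
      have hev1 : ∀ᶠ ε in nhdsWithin (0:ℝ) (Set.Ioi 0),
          (1+ε) + (1+ε)*(α⁻¹/((1-ε)/β - α⁻¹) + ε) < b := htd.eventually_lt_const hb
      have hba : (0:ℝ) < 1 - β/α := by
        rw [sub_pos, div_lt_one hα]
        exact hβα
      have hev2 : ∀ᶠ ε in nhdsWithin (0:ℝ) (Set.Ioi 0),
          ε ∈ Set.Ioo (0:ℝ) (min 1 (1 - β/α)) :=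
        Ioo_mem_nhdsGT_of_mem ⟨le_refl 0, lt_min one_pos hba⟩
      obtain ⟨ε, hεb, hεmem⟩ := (hev1.and hev2).exists
      have hε0 : (0:ℝ) < ε := hεmem.1
      have hε1 : ε < 1 := lt_of_lt_of_le hεmem.2 (min_le_left _ _)
      have hε1' : (0:ℝ) < 1 + ε := by linarith
      have hq0 : (0:ℝ) ≤ (1-ε)/β := div_nonneg (by linarith) hβpos.le
      have hεa : ε < 1 - β/α := lt_of_lt_of_le hεmem.2 (min_le_right _ _)
      have hpm : α⁻¹ < (1-ε)/β := by
        rw [lt_div_iff₀ hβpos]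
        have h10 : β/α < 1 - ε := by linarith
        have h11 : α⁻¹ * β = β/α := by rw [div_eq_mul_inv, mul_comm]
        linarith
      obtain ⟨x₀, hx₀1, hpotX⟩ := potter _ hTXanti hTXpos 1 one_pos hTXrv ε ε hε0 hε1 hε0
      have hkar := (karamata ν α⁻¹ ((1-ε)/β) (inv_pos.mpr hα) hpm hGrv hGpos).comp hτtend
      have hIci := (tail_Ici ν α⁻¹ (inv_pos.mpr hα) hGrv hGpos).comp hτtend
      filter_upwards [eventually_ge_atTop (max x₀ 1),
        hkar.eventually_lt_const (lt_add_of_pos_right (α⁻¹/((1-ε)/β - α⁻¹)) hε0),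
        hIci.eventually_lt_const (show (1:ℝ) < 1 + ε by linarith)] with x hx hkarx hIcix
      have hx₀x : x₀ ≤ x := le_trans (le_max_left _ _) hx
      have hx1 : (1:ℝ) ≤ x := le_trans (le_max_right _ _) hx
      have hx0 : (0:ℝ) < x := lt_of_lt_of_le zero_lt_one hx1
      have hτ0 : 0 < x ^ (1-β) := Real.rpow_pos_of_pos hx0 _
      -- pointwise Potter upper bound
      have hptw : ∀ z : ℝ, Set.indicator (Set.Ioo 0 (x ^ (1-β)))
            (fun z => (μX (Set.Ioi (x * ((x ^ (1-β))/z) ^ β⁻¹))).toReal) z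
          ≤ Set.indicator (Set.Ioo 0 (x ^ (1-β)))
            (fun z => (1+ε) * (P {ω | x < X ω}).toReal * (z/(x ^ (1-β))) ^ ((1-ε)/β)) z := by
        intro z
        by_cases hz : z ∈ Set.Ioo 0 (x ^ (1-β))
        · rw [Set.indicator_of_mem hz, Set.indicator_of_mem hz]
          have hz0 : (0:ℝ) < z := hz.1
          have hu1 : (1:ℝ) ≤ ((x ^ (1-β))/z) ^ β⁻¹ :=
            Real.one_le_rpow ((one_le_div hz0).mpr hz.2.le) (inv_pos.mpr hβpos).le
          have hPot := (hpotX x hx₀x (((x ^ (1-β))/z) ^ β⁻¹) hu1).1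
          have hexp : (((x ^ (1-β))/z) ^ β⁻¹) ^ (-(1-ε)) = (z/(x ^ (1-β))) ^ ((1-ε)/β) := by
            rw [← Real.rpow_mul (div_nonneg hτ0.le hz0.le),
              show z/(x ^ (1-β)) = ((x ^ (1-β))/z)⁻¹ by rw [inv_div],
              Real.inv_rpow (div_nonneg hτ0.le hz0.le),
              ← Real.rpow_neg (div_nonneg hτ0.le hz0.le)]
            congr 1
            field_simp
            try ring
          rw [hμX_Ioi]
          calc (P {ω | x * ((x ^ (1-β))/z) ^ β⁻¹ < X ω}).toReal
              ≤ (1+ε) * (((x ^ (1-β))/z) ^ β⁻¹) ^ (-(1-ε)) * (P {ω | x < X ω}).toReal := hPot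
            _ = (1+ε) * (P {ω | x < X ω}).toReal * (z/(x ^ (1-β))) ^ ((1-ε)/β) := by
                rw [hexp]; ring
        · rw [Set.indicator_of_notMem hz, Set.indicator_of_notMem hz]
      have hB_le : ((μX.prod ν) {p : ℝ × ℝ | 0 < p.2 ∧ p.2 < x ^ (1-β) ∧
              x * ((x ^ (1-β))/p.2) ^ β⁻¹ < p.1}).toReal
          ≤ (1+ε) * (P {ω | x < X ω}).toReal *
            (∫ z, Set.indicator (Set.Ioo 0 (x ^ (1-β)))
              (fun z => (z/(x ^ (1-β))) ^ ((1-ε)/β)) z ∂ν) := by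
        rw [prod_section_eq μX ν x (x ^ (1-β)) β⁻¹ hτ0 (inv_pos.mpr hβpos).le,
          ← indicator_const_mul_integral]
        apply integral_mono ?_ ?_ hptw
        · apply integrable_indicator_bdd ν measurableSet_Ioo ?_ 1
          · intro z hz
            exact ENNReal.toReal_nonneg
          · intro z hz
            exact prob_toReal_le_one _
          · have h1 : Antitone fun c : ℝ => (μX (Set.Ioi c)).toReal := fun a b hab =>
              ENNReal.toReal_le_toReal (measure_ne_top _ _) (measure_ne_top _ _) |>.mpr
                (measure_mono (Set.Ioi_subset_Ioi hab))
            exact h1.measurable.comp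
              ((((Real.continuous_rpow_const (inv_pos.mpr hβpos).le).measurable).comp
                (measurable_const.div measurable_id)).const_mul x)
        · apply integrable_indicator_bdd ν measurableSet_Ioo ?_
            ((1+ε) * (P {ω | x < X ω}).toReal)
          · intro z hz
            exact mul_nonneg (mul_nonneg hε1'.le ENNReal.toReal_nonneg)
              (Real.rpow_nonneg (div_nonneg hz.1.le hτ0.le) _)
          · intro z hz
            have h7 : (z/(x ^ (1-β))) ^ ((1-ε)/β) ≤ 1 :=
              Real.rpow_le_one (div_nonneg hz.1.le hτ0.le)
                ((div_le_one hτ0).mpr hz.2.le) hq0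
            calc (1+ε) * (P {ω | x < X ω}).toReal * (z/(x ^ (1-β))) ^ ((1-ε)/β)
                ≤ (1+ε) * (P {ω | x < X ω}).toReal * 1 := by
                  apply mul_le_mul_of_nonneg_left h7
                  exact mul_nonneg hε1'.le ENNReal.toReal_nonneg
              _ = (1+ε) * (P {ω | x < X ω}).toReal := mul_one _
          · exact ((Real.continuous_rpow_const hq0).measurable.comp
              (measurable_id.div_const _)).const_mul _
      -- assemble
      have hGτ := hGpos (x ^ (1-β))
      have hTXx := hTXpos x
      have hkarx' : (∫ z, Set.indicator (Set.Ioo 0 (x ^ (1-β)))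
            (fun z => (z/(x ^ (1-β))) ^ ((1-ε)/β)) z ∂ν)
          < (α⁻¹/((1-ε)/β - α⁻¹) + ε) * (ν (Set.Ioi (x ^ (1-β)))).toReal := by
        have h8 : (∫ z, Set.indicator (Set.Ioo 0 (x ^ (1-β)))
            (fun z => (z/(x ^ (1-β))) ^ ((1-ε)/β)) z ∂ν) / (ν (Set.Ioi (x ^ (1-β)))).toReal
            < α⁻¹/((1-ε)/β - α⁻¹) + ε := hkarx
        rwa [div_lt_iff₀ (hGpos _)] at h8
      have hIcix' : (ν (Set.Ici (x ^ (1-β)))).toReal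
          < (1+ε) * (ν (Set.Ioi (x ^ (1-β)))).toReal := by
        have h8 : (ν (Set.Ici (x ^ (1-β)))).toReal / (ν (Set.Ioi (x ^ (1-β)))).toReal
            < 1 + ε := hIcix
        rwa [div_lt_iff₀ (hGpos _)] at h8
      have hν2 : (P {ω | x ^ (1-β) < Y ω ^ α}).toReal = (ν (Set.Ioi (x ^ (1-β)))).toReal := by
        rw [hν_Ioi]
      rw [hsplit x hx1, hν2, div_lt_iff₀ (mul_pos hTXx hGτ)]
      have hb' : ((1+ε) + (1+ε)*(α⁻¹/((1-ε)/β - α⁻¹) + ε)) *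
            ((P {ω | x < X ω}).toReal * (ν (Set.Ioi (x ^ (1-β)))).toReal)
          < b * ((P {ω | x < X ω}).toReal * (ν (Set.Ioi (x ^ (1-β)))).toReal) :=
        mul_lt_mul_of_pos_right hεb (mul_pos hTXx hGτ)
      have hmono1 := mul_le_mul_of_nonneg_left hkarx'.le
        (mul_nonneg hε1'.le ENNReal.toReal_nonneg :
          (0:ℝ) ≤ (1+ε) * (P {ω | x < X ω}).toReal)
      nlinarith [hB_le, hmono1, mul_lt_mul_of_pos_left hIcix' hTXx]
end

section
/- Let X_1,...,X_n be independent nonnegative random variables, each regularly varying with index −1. Let α_1,...,α_n, β_1,...,β_n ≥ 0 with max_i α_i > 0 and max_i β_i > 0, and set Y_0 = Π_{i=1}^n X_i^{α_i}, Y_1 = Π_{i=1}^n X_i^{β_i}. Let (κ_1,...,κ_n) be a solution of the linear program 'minimize Σ κ_i subject to Σ α_i κ_i ≥ 1, Σ β_i κ_i ≥ 1, κ_i ≥ 0'. Then for every ε > 0, as x → ∞: P(Y_0 > x, Y_1 > x) = o(x^{ε − Σκ_i}) and x^{−ε − Σκ_i} = o(P(Y_0 > x, Y_1 > x)). -/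
open MeasureTheory ProbabilityTheory Filter Topology
open scoped ENNReal

/-- feasibility for the n-dimensional linear program -/
def FeasN {n : ℕ} (a b κ : Fin n → ℝ) : Prop :=
  (∀ i, 0 ≤ κ i) ∧ 1 ≤ ∑ i, a i * κ i ∧ 1 ≤ ∑ i, b i * κ i

section PotterAux
open Real


lemma potter_iter_upper {f : ℝ → ℝ} {s x1 c : ℝ} (hs : 1 < s) (hx1 : 1 ≤ x1)
    (hc : 0 ≤ c)
    (hstep : ∀ x, x1 ≤ x → f (s * x) ≤ c * f x) :
    ∀ k : ℕ, f (s ^ k * x1) ≤ c ^ k * f x1 := by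
  intro k
  induction k with
  | zero => simp
  | succ k ih =>
    have hsk : (1:ℝ) ≤ s ^ k := one_le_pow₀ hs.le
    have h1 : x1 ≤ s ^ k * x1 := le_mul_of_one_le_left (by linarith) hsk
    have h2 : f (s ^ (k+1) * x1) = f (s * (s ^ k * x1)) := by ring_nf
    calc f (s ^ (k+1) * x1) = f (s * (s ^ k * x1)) := h2
      _ ≤ c * f (s ^ k * x1) := hstep _ h1
      _ ≤ c * (c ^ k * f x1) := mul_le_mul_of_nonneg_left ih hc
      _ = c ^ (k+1) * f x1 := by ring

lemma potter_iter_lower {f : ℝ → ℝ} {s x1 c : ℝ} (hs : 1 < s) (hx1 : 1 ≤ x1)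
    (hc : 0 ≤ c)
    (hstep : ∀ x, x1 ≤ x → c * f x ≤ f (s * x)) :
    ∀ k : ℕ, c ^ k * f x1 ≤ f (s ^ k * x1) := by
  intro k
  induction k with
  | zero => simp
  | succ k ih =>
    have hsk : (1:ℝ) ≤ s ^ k := one_le_pow₀ hs.le
    have h1 : x1 ≤ s ^ k * x1 := le_mul_of_one_le_left (by linarith) hsk
    have h2 : f (s ^ (k+1) * x1) = f (s * (s ^ k * x1)) := by ring_nf
    calc c ^ (k+1) * f x1 = c * (c ^ k * f x1) := by ring
      _ ≤ c * f (s ^ k * x1) := mul_le_mul_of_nonneg_left ih hc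
      _ ≤ f (s * (s ^ k * x1)) := hstep _ h1
      _ = f (s ^ (k+1) * x1) := h2.symm

lemma potter_upper {f : ℝ → ℝ} (hf : Antitone f) (hpos : ∀ x, 0 < f x) (hle : ∀ x, f x ≤ 1)
    (h : ∀ s : ℝ, 0 < s → Tendsto (fun x => f (s * x) / f x) atTop (nhds s⁻¹))
    {δ : ℝ} (hδ : 0 < δ) :
    ∀ᶠ x in atTop, f x ≤ x ^ (-1 + δ) := by
  rcases le_or_gt 1 δ with hδ1 | hδ1
  · filter_upwards [eventually_ge_atTop 1] with x hx
    calc f x ≤ 1 := hle x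
      _ = x ^ (0:ℝ) := (rpow_zero x).symm
      _ ≤ x ^ (-1+δ) := rpow_le_rpow_of_exponent_le hx (by linarith)
  set s : ℝ := 2 ^ (2/δ) with hs_def
  have hs2 : (2:ℝ) < s := by
    calc (2:ℝ) = 2 ^ (1:ℝ) := (rpow_one 2).symm
      _ < 2 ^ (2/δ) := by
          apply rpow_lt_rpow_of_exponent_lt one_lt_two
          rw [lt_div_iff₀ hδ]; linarith
  have hs1 : 1 < s := by linarith
  have hs0 : 0 < s := by linarith
  have hlogs : Real.log s = (2/δ) * Real.log 2 := Real.log_rpow two_pos _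
  have hlog2 : Real.log 2 = (δ/2) * Real.log s := by rw [hlogs]; field_simp
  have hlogs_pos : 0 < Real.log s := Real.log_pos hs1
  have hev : ∀ᶠ x in atTop, f (s*x)/f x ≤ 2/s := by
    refine (h s hs0).eventually_le_const ?_
    rw [inv_eq_one_div]
    exact (div_lt_div_iff_of_pos_right hs0).2 one_lt_two
  obtain ⟨x0, hx0⟩ := eventually_atTop.1 hev
  set x1 := max x0 1 with hx1def
  have hx1 : 1 ≤ x1 := le_max_right _ _
  have hx1pos : 0 < x1 := lt_of_lt_of_le one_pos hx1
  have hstep : ∀ x, x1 ≤ x → f (s*x) ≤ (2/s) * f x := by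
    intro x hx
    have h2 := hx0 x (le_trans (le_max_left _ _) hx)
    exact (div_le_iff₀ (hpos x)).1 h2
  have hiter := potter_iter_upper hs1 hx1 (by positivity) hstep
  have hc1 : (2/s) < 1 := by rw [div_lt_one hs0]; exact hs2
  have hlogc : Real.log (2/s) = Real.log 2 - Real.log s := Real.log_div two_ne_zero hs0.ne'
  have hlogc_neg : Real.log (2/s) < 0 := by
    rw [hlogc, hlog2]; nlinarith [hlogs_pos]
  set c0 : ℝ := ((1-δ/2) * Real.log x1 + Real.log s - Real.log 2) * (2/δ) with hc0def
  filter_upwards [eventually_ge_atTop x1,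
    Real.tendsto_log_atTop.eventually (eventually_ge_atTop c0),
    eventually_gt_atTop 0] with x hxx1 hlogx hx0'
  set r : ℝ := Real.log (x/x1) / Real.log s with hrdef
  have hxx1' : 1 ≤ x / x1 := (one_le_div hx1pos).2 hxx1
  have hr0 : 0 ≤ r := div_nonneg (Real.log_nonneg hxx1') hlogs_pos.le
  set k : ℕ := ⌊r⌋₊ with hkdef
  have hk_le : (k:ℝ) ≤ r := Nat.floor_le hr0
  have hk_gt : r - 1 < (k:ℝ) := Nat.sub_one_lt_floor r
  have hrlog : r * Real.log s = Real.log (x/x1) := div_mul_cancel₀ _ hlogs_pos.ne'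
  -- s^k * x1 ≤ x
  have hskx : (s:ℝ) ^ k * x1 ≤ x := by
    have h3 : (s:ℝ) ^ k ≤ x / x1 := by
      have h4 : (s:ℝ) ^ k = s ^ ((k:ℕ):ℝ) := (rpow_natCast s k).symm
      rw [h4]
      calc s ^ ((k:ℕ):ℝ) ≤ s ^ r := rpow_le_rpow_of_exponent_le hs1.le hk_le
        _ = x / x1 := by
            rw [rpow_def_of_pos hs0, mul_comm (Real.log s) r, hrlog,
              Real.exp_log (by positivity : (0:ℝ) < x / x1)]
    calc (s:ℝ)^k * x1 ≤ (x/x1) * x1 := mul_le_mul_of_nonneg_right h3 hx1pos.le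
      _ = x := div_mul_cancel₀ x hx1pos.ne'
  have hfx : f x ≤ (2/s)^k := by
    calc f x ≤ f (s^k * x1) := hf hskx
      _ ≤ (2/s)^k * f x1 := hiter k
      _ ≤ (2/s)^k * 1 := mul_le_mul_of_nonneg_left (hle x1) (by positivity)
      _ = (2/s)^k := mul_one _
  -- (2/s)^k = exp (k * log (2/s)) ≤ exp ((r-1) * log(2/s))
  have hexp : ((2/s):ℝ)^k = Real.exp ((k:ℝ) * Real.log (2/s)) := by
    rw [← Real.log_pow, Real.exp_log (by positivity)]
  have hineq : (k:ℝ) * Real.log (2/s) ≤ (δ - 1) * Real.log x := by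
    have h5 : (k:ℝ) * Real.log (2/s) ≤ (r - 1) * Real.log (2/s) :=
      mul_le_mul_of_nonpos_right hk_gt.le hlogc_neg.le
    have h6 : Real.log (x/x1) = Real.log x - Real.log x1 :=
      Real.log_div hx0'.ne' hx1pos.ne'
    have h7 : r * Real.log 2 = (δ/2) * Real.log (x/x1) := by
      rw [hlog2, ← hrlog]; ring
    have h8 : (r-1) * Real.log (2/s)
        = (δ/2 - 1) * (Real.log x - Real.log x1) - Real.log 2 + Real.log s := by
      rw [hlogc]; linear_combination h7 - hrlog + (δ/2 - 1) * h6
    have h9 : c0 ≤ Real.log x := hlogx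
    have h10 : c0 * (δ/2) = (1-δ/2) * Real.log x1 + Real.log s - Real.log 2 := by
      rw [hc0def]; field_simp
    have hint := mul_le_mul_of_nonneg_left h9 (by linarith : (0:ℝ) ≤ δ/2)
    linarith [h5, h8, h10, hint]
  calc f x ≤ (2/s)^k := hfx
    _ = Real.exp ((k:ℝ) * Real.log (2/s)) := hexp
    _ ≤ Real.exp ((δ-1) * Real.log x) := Real.exp_le_exp.2 hineq
    _ = x ^ (δ - 1) := by rw [rpow_def_of_pos hx0', mul_comm]
    _ = x ^ (-1 + δ) := by ring_nf

lemma potter_lower {f : ℝ → ℝ} (hf : Antitone f) (hpos : ∀ x, 0 < f x)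
    (h : ∀ s : ℝ, 0 < s → Tendsto (fun x => f (s * x) / f x) atTop (nhds s⁻¹))
    {δ : ℝ} (hδ : 0 < δ) :
    ∀ᶠ x in atTop, x ^ (-1 - δ) ≤ f x := by
  set s : ℝ := 2 ^ (2/δ) with hs_def
  have hs1 : (1:ℝ) < s := Real.one_lt_rpow_iff_of_pos two_pos |>.2 (Or.inl ⟨one_lt_two, by positivity⟩)
  have hs0 : 0 < s := lt_trans one_pos hs1
  have hlogs : Real.log s = (2/δ) * Real.log 2 := Real.log_rpow two_pos _
  have hlog2 : Real.log 2 = (δ/2) * Real.log s := by rw [hlogs]; field_simp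
  have hlogs_pos : 0 < Real.log s := Real.log_pos hs1
  have hc0 : (0:ℝ) < 1/(2*s) := by positivity
  have hev : ∀ᶠ x in atTop, 1/(2*s) ≤ f (s*x)/f x := by
    refine (h s hs0).eventually_const_le ?_
    rw [inv_eq_one_div]
    apply div_lt_div_of_pos_left one_pos hs0
    linarith
  obtain ⟨x0, hx0⟩ := eventually_atTop.1 hev
  set x1 := max x0 1 with hx1def
  have hx1 : 1 ≤ x1 := le_max_right _ _
  have hx1pos : 0 < x1 := lt_of_lt_of_le one_pos hx1
  have hstep : ∀ x, x1 ≤ x → (1/(2*s)) * f x ≤ f (s*x) := by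
    intro x hx
    have h2 := hx0 x (le_trans (le_max_left _ _) hx)
    exact (le_div_iff₀ (hpos x)).1 h2
  have hiter := potter_iter_lower hs1 hx1 hc0.le hstep
  set C := f x1 with hCdef
  have hCpos : 0 < C := hpos x1
  have hlog2s : Real.log (2*s) = Real.log 2 + Real.log s := Real.log_mul two_ne_zero hs0.ne'
  have hlogc : Real.log (1/(2*s)) = -(Real.log (2*s)) := by rw [one_div, Real.log_inv]
  have hlogc_neg : Real.log (1/(2*s)) < 0 := by
    rw [hlogc, hlog2s]; nlinarith [Real.log_nonneg one_le_two, hlogs_pos]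
  set c0 : ℝ := ((1+δ/2) * Real.log x1 + Real.log (2*s) - Real.log C) * (2/δ) with hc0def
  filter_upwards [eventually_ge_atTop x1,
    Real.tendsto_log_atTop.eventually (eventually_ge_atTop c0),
    eventually_gt_atTop 0] with x hxx1 hlogx hx0'
  set r : ℝ := Real.log (x/x1) / Real.log s with hrdef
  have hxx1' : 1 ≤ x / x1 := (one_le_div hx1pos).2 hxx1
  have hr0 : 0 ≤ r := div_nonneg (Real.log_nonneg hxx1') hlogs_pos.le
  set k : ℕ := ⌊r⌋₊ with hkdef
  have hk_le : (k:ℝ) ≤ r := Nat.floor_le hr0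
  have hk1 : r < (k:ℝ) + 1 := Nat.lt_floor_add_one r
  have hrlog : r * Real.log s = Real.log (x/x1) := div_mul_cancel₀ _ hlogs_pos.ne'
  have hxk : x ≤ s ^ (k+1) * x1 := by
    have h3 : x / x1 ≤ s ^ (k+1) := by
      have h4 : (s:ℝ) ^ (k+1) = s ^ (((k+1):ℕ):ℝ) := (rpow_natCast s (k+1)).symm
      rw [h4]
      calc x / x1 = s ^ r := by
            rw [rpow_def_of_pos hs0, mul_comm (Real.log s) r, hrlog,
              Real.exp_log (by positivity : (0:ℝ) < x / x1)]
        _ ≤ s ^ (((k+1):ℕ):ℝ) := by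
            apply rpow_le_rpow_of_exponent_le hs1.le
            push_cast; linarith
    calc x = (x/x1) * x1 := (div_mul_cancel₀ x hx1pos.ne').symm
      _ ≤ s ^ (k+1) * x1 := mul_le_mul_of_nonneg_right h3 hx1pos.le
  have hfx : (1/(2*s)) ^ (k+1) * C ≤ f x := le_trans (hiter (k+1)) (hf hxk)
  have hexp : ((1/(2*s)):ℝ)^(k+1) * C
      = Real.exp (((k:ℝ)+1) * Real.log (1/(2*s)) + Real.log C) := by
    rw [Real.exp_add, Real.exp_log hCpos]
    congr 1
    rw [show ((k:ℝ)+1) = ((k+1:ℕ):ℝ) by push_cast; ring, ← Real.log_pow,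
      Real.exp_log (by positivity)]
  have hineq : (-1 - δ) * Real.log x ≤ ((k:ℝ)+1) * Real.log (1/(2*s)) + Real.log C := by
    have h5 : (r+1) * Real.log (1/(2*s)) ≤ ((k:ℝ)+1) * Real.log (1/(2*s)) :=
      mul_le_mul_of_nonpos_right (by linarith) hlogc_neg.le
    have h6 : Real.log (x/x1) = Real.log x - Real.log x1 :=
      Real.log_div hx0'.ne' hx1pos.ne'
    have h7 : r * Real.log 2 = (δ/2) * Real.log (x/x1) := by
      rw [hlog2, ← hrlog]; ring
    have h8 : (r+1) * Real.log (1/(2*s))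
        = (-(1+δ/2)) * (Real.log x - Real.log x1) - Real.log (2*s) := by
      rw [hlogc, hlog2s]
      linear_combination -h7 - hrlog - (1+δ/2) * h6
    have h9 : c0 ≤ Real.log x := hlogx
    have h10 : c0 * (δ/2) = (1+δ/2) * Real.log x1 + Real.log (2*s) - Real.log C := by
      rw [hc0def]; field_simp
    have hint := mul_le_mul_of_nonneg_left h9 (by linarith : (0:ℝ) ≤ δ/2)
    have hx1log : 0 ≤ Real.log x1 := Real.log_nonneg hx1
    linarith [h5, h8, h10, hint, hx1log, mul_nonneg hδ.le hx1log]
  calc x ^ (-1-δ) = Real.exp ((-1-δ) * Real.log x) := by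
        rw [rpow_def_of_pos hx0', mul_comm]
    _ ≤ Real.exp (((k:ℝ)+1) * Real.log (1/(2*s)) + Real.log C) := Real.exp_le_exp.2 hineq
    _ = (1/(2*s))^(k+1) * C := hexp.symm
    _ ≤ f x := hfx

section Tail

variable {Ω : Type*} [MeasurableSpace Ω] {P : Measure Ω} [IsProbabilityMeasure P] {X : Ω → ℝ}

lemma tail_anti : Antitone (fun y => (P {ω | y < X ω}).toReal) := by
  intro y z hyz
  exact ENNReal.toReal_mono (measure_ne_top _ _)
    (measure_mono (fun ω hω => lt_of_le_of_lt hyz hω))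

lemma tail_le_one (s : Set Ω) : (P s).toReal ≤ 1 := by
  rw [show (1:ℝ) = (P Set.univ).toReal by simp]
  exact ENNReal.toReal_mono (measure_ne_top _ _) (measure_mono (Set.subset_univ s))

lemma tail_pos_s12
    (hrv : ∀ s : ℝ, 0 < s → Filter.Tendsto
      (fun x : ℝ => (P {ω | s * x < X ω}).toReal / (P {ω | x < X ω}).toReal)
      atTop (nhds s⁻¹)) :
    ∀ y : ℝ, 0 < (P {ω | y < X ω}).toReal := by
  by_contra hcon
  push_neg at hcon
  obtain ⟨y0, hy0⟩ := hcon
  have hy0' : (P {ω | y0 < X ω}).toReal = 0 := le_antisymm hy0 ENNReal.toReal_nonneg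
  have hzero : ∀ y, y0 ≤ y → (P {ω | y < X ω}).toReal = 0 := fun y hy =>
    le_antisymm (hy0' ▸ tail_anti hy) ENNReal.toReal_nonneg
  have h0 : Filter.Tendsto
      (fun x : ℝ => (P {ω | (1:ℝ) * x < X ω}).toReal / (P {ω | x < X ω}).toReal)
      atTop (nhds 0) := by
    apply Filter.Tendsto.congr' _ tendsto_const_nhds
    filter_upwards [eventually_ge_atTop y0] with x hx
    rw [hzero x hx, div_zero]
  have := tendsto_nhds_unique (hrv 1 one_pos) h0
  norm_num at this

lemma tail_up
    (hrv : ∀ s : ℝ, 0 < s → Filter.Tendsto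
      (fun x : ℝ => (P {ω | s * x < X ω}).toReal / (P {ω | x < X ω}).toReal)
      atTop (nhds s⁻¹))
    {δ : ℝ} (hδ : 0 < δ) :
    ∀ᶠ y : ℝ in atTop, (P (X ⁻¹' Set.Ici y)).toReal ≤ y ^ (-1 + δ) := by
  set f : ℝ → ℝ := fun y => (P {ω | y < X ω}).toReal with hfdef
  have hup := potter_upper (f := f) tail_anti (tail_pos_s12 hrv) (fun y => tail_le_one _)
    (fun s hs => hrv s hs) (by positivity : (0:ℝ) < δ/2)
  have hpow : Filter.Tendsto (fun y : ℝ => y / 2) atTop atTop :=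
    Filter.tendsto_id.atTop_div_const two_pos
  have hfac : ∀ᶠ y : ℝ in atTop, (2:ℝ) ^ (1 - δ/2) ≤ y ^ (δ/2) :=
    (tendsto_rpow_atTop (by positivity : (0:ℝ) < δ/2)).eventually_ge_atTop _
  filter_upwards [hpow.eventually hup, hfac, eventually_ge_atTop 1] with y hy hf hy1
  have hy0 : (0:ℝ) < y := lt_of_lt_of_le one_pos hy1
  have sub : (P (X ⁻¹' Set.Ici y)).toReal ≤ f (y/2) := by
    apply ENNReal.toReal_mono (measure_ne_top _ _)
    apply measure_mono
    intro ω hω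
    have : y ≤ X ω := hω
    show y / 2 < X ω
    linarith
  calc (P (X ⁻¹' Set.Ici y)).toReal ≤ f (y/2) := sub
    _ ≤ (y/2) ^ (-1 + δ/2) := hy
    _ = y ^ (-1 + δ/2) * ((2:ℝ) ^ (-1+δ/2))⁻¹ := by
        rw [Real.div_rpow hy0.le (by norm_num : (0:ℝ) ≤ 2), div_eq_mul_inv]
    _ = y ^ (-1 + δ/2) * (2:ℝ) ^ (1 - δ/2) := by
        rw [show (1 - δ/2 : ℝ) = -(-1+δ/2) by ring,
          Real.rpow_neg (by norm_num : (0:ℝ) ≤ 2)]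
    _ ≤ y ^ (-1 + δ/2) * y ^ (δ/2) :=
        mul_le_mul_of_nonneg_left hf (Real.rpow_nonneg hy0.le _)
    _ = y ^ (-1 + δ) := by
        rw [← Real.rpow_add hy0]; ring_nf
    
lemma tail_lo
    (hrv : ∀ s : ℝ, 0 < s → Filter.Tendsto
      (fun x : ℝ => (P {ω | s * x < X ω}).toReal / (P {ω | x < X ω}).toReal)
      atTop (nhds s⁻¹))
    {δ : ℝ} (hδ : 0 < δ) :
    ∀ᶠ y : ℝ in atTop, y ^ (-1 - δ) ≤ (P (X ⁻¹' Set.Ici y)).toReal := by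
  have hlo := potter_lower (f := fun y => (P {ω | y < X ω}).toReal) tail_anti
    (tail_pos_s12 hrv) (fun s hs => hrv s hs) hδ
  filter_upwards [hlo] with y hy
  calc y ^ (-1-δ) ≤ (P {ω | y < X ω}).toReal := hy
    _ ≤ (P (X ⁻¹' Set.Ici y)).toReal :=
        ENNReal.toReal_mono (measure_ne_top _ _)
          (measure_mono fun ω hω => (le_of_lt hω : y ≤ X ω))

end Tail

end PotterAux

set_option maxHeartbeats 4000000 in
/-- Theorem 4.2 (iii): for Y₀ = ∏ X_i^{α_i}, Y₁ = ∏ X_i^{β_i} and any optimal solution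
κ of the linear program, P(Y₀ > x, Y₁ > x) = o(x^{ε-Σκ}) and
x^{-ε-Σκ} = o(P(Y₀ > x, Y₁ > x)) for every ε > 0. -/
theorem power_products_order {Ω : Type*} [MeasurableSpace Ω] (P : Measure Ω)
    [IsProbabilityMeasure P] {n : ℕ} (X : Fin n → Ω → ℝ)
    (hXmeas : ∀ i, Measurable (X i))
    (hX0 : ∀ i ω, 0 ≤ X i ω)
    (hindep : iIndepFun X P)
    (hrv : ∀ i, RegVarNegOne P (X i))
    (a b : Fin n → ℝ) (ha : ∀ i, 0 ≤ a i) (hb : ∀ i, 0 ≤ b i)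
    (hamax : ∃ i, 0 < a i) (hbmax : ∃ i, 0 < b i)
    (κ : Fin n → ℝ) (hfeas : FeasN a b κ)
    (hopt : ∀ κ' : Fin n → ℝ, FeasN a b κ' → ∑ i, κ i ≤ ∑ i, κ' i)
    (ε : ℝ) (hε : 0 < ε) :
    Tendsto (fun x : ℝ =>
        (P {ω | x < ∏ i, X i ω ^ a i ∧ x < ∏ i, X i ω ^ b i}).toReal /
          x ^ (ε - ∑ i, κ i)) atTop (nhds 0) ∧
    Tendsto (fun x : ℝ =>
        x ^ (-ε - ∑ i, κ i) /
          (P {ω | x < ∏ i, X i ω ^ a i ∧ x < ∏ i, X i ω ^ b i}).toReal)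
      atTop (nhds 0) := by
  classical
  obtain ⟨i0a, hi0a⟩ := hamax
  obtain ⟨i0b, hi0b⟩ := hbmax
  obtain ⟨hκ0, hκa, hκb⟩ := hfeas
  set S : ℝ := ∑ i, κ i with hSdef
  have hS0 : 0 ≤ S := Finset.sum_nonneg fun i _ => hκ0 i
  have hS_pos : 0 < S := by
    rcases hS0.lt_or_eq with h | h
    · exact h
    · exfalso
      have hz : ∀ i ∈ Finset.univ, κ i = 0 :=
        (Finset.sum_eq_zero_iff_of_nonneg (fun i _ => hκ0 i)).1 h.symm
      have hzz : ∑ i, a i * κ i = 0 :=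
        Finset.sum_eq_zero fun i hi => by rw [hz i hi, mul_zero]
      rw [hzz] at hκa
      linarith
  have hn : 0 < n := i0a.pos
  have hnR : (0:ℝ) < n := by exact_mod_cast hn
  have hA : 0 < ∑ i, a i := Finset.sum_pos' (fun i _ => ha i) ⟨i0a, Finset.mem_univ _, hi0a⟩
  have hB : 0 < ∑ i, b i := Finset.sum_pos' (fun i _ => hb i) ⟨i0b, Finset.mem_univ _, hi0b⟩
  have htail_up : ∀ i : Fin n, ∀ δ : ℝ, 0 < δ →
      ∀ᶠ y : ℝ in atTop, (P (X i ⁻¹' Set.Ici y)).toReal ≤ y ^ (-1 + δ) :=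
    fun i δ hδ => tail_up (hrv i) hδ
  have htail_lo : ∀ i : Fin n, ∀ δ : ℝ, 0 < δ →
      ∀ᶠ y : ℝ in atTop, y ^ (-1 - δ) ≤ (P (X i ⁻¹' Set.Ici y)).toReal :=
    fun i δ hδ => tail_lo (hrv i) hδ
  have hindep' : ∀ c : Fin n → ℝ,
      P (⋂ i, X i ⁻¹' Set.Ici (c i)) = ∏ i, P (X i ⁻¹' Set.Ici (c i)) :=
    fun c => hindep.meas_iInter fun i => ⟨Set.Ici (c i), measurableSet_Ici, rfl⟩
  constructor
  · -- upper bound part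
    set A : ℝ := ∑ i, a i with hAdef
    set B2 : ℝ := ∑ i, b i with hB2def
    have hABpos : 0 < A + B2 := by linarith
    set δ : ℝ := min (1/(2*(A+B2+1))) (ε/(2*(S*(A+B2)+n+1))) with hδdef
    have hq1 : (0:ℝ) < 2*(A+B2+1) := by linarith
    have hq2 : (0:ℝ) < S*(A+B2)+n+1 := by positivity
    have hδpos : 0 < δ := lt_min (by positivity) (by positivity)
    have hδhalf : δ ≤ 1/2 := by
      calc δ ≤ 1/(2*(A+B2+1)) := min_le_left _ _
        _ ≤ 1/2 := by
          apply div_le_div_of_nonneg_left (by norm_num) (by norm_num)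
          linarith
    have hδA : δ * (A+B2) ≤ 1/2 := by
      have h1 : δ ≤ 1/(2*(A+B2+1)) := min_le_left _ _
      have h2 : δ * (A+B2) ≤ (1/(2*(A+B2+1))) * (A+B2) :=
        mul_le_mul_of_nonneg_right h1 hABpos.le
      have h3 : (1/(2*(A+B2+1))) * (A+B2) ≤ 1/2 := by
        rw [div_mul_eq_mul_div, div_le_div_iff₀ hq1 (by norm_num)]
        nlinarith
      linarith
    have hδε2 : δ * (S*(A+B2)+n) ≤ ε/2 := by
      have h1 : δ ≤ ε/(2*(S*(A+B2)+n+1)) := min_le_right _ _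
      have hpos2 : (0:ℝ) ≤ S*(A+B2)+n := by positivity
      have h2 : δ * (S*(A+B2)+n) ≤ ε/(2*(S*(A+B2)+n+1)) * (S*(A+B2)+n) :=
        mul_le_mul_of_nonneg_right h1 hpos2
      have h3 : ε/(2*(S*(A+B2)+n+1)) * (S*(A+B2)+n) ≤ ε/2 := by
        rw [div_mul_eq_mul_div, div_le_div_iff₀ (by linarith) (by norm_num)]
        nlinarith
      linarith
    set M : ℝ := S + ε + 1 with hMdef
    set K : ℕ := ⌈M/δ⌉₊ with hKdef
    have hK1 : 1 ≤ K := by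
      rw [hKdef, Nat.one_le_ceil_iff]
      have : 0 < M := by rw [hMdef]; linarith
      positivity
    have hKR : (0:ℝ) < K := by exact_mod_cast hK1
    have hKδ : M ≤ K * δ := by
      have h1 := Nat.le_ceil (M/δ)
      calc M = (M/δ)*δ := by field_simp
        _ ≤ K * δ := mul_le_mul_of_nonneg_right h1 hδpos.le
    clear_value A B2 δ M K
    have hLP : ∀ t : Fin n → ℝ, (∀ i, 0 ≤ t i) → (1 - δ*A ≤ ∑ i, a i * t i) →
        (1 - δ*B2 ≤ ∑ i, b i * t i) → S - δ*(S*(A+B2)) ≤ ∑ i, t i := by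
      intro t ht hta htb
      set c : ℝ := 1 - δ*(A+B2) with hcdef
      have hc : 0 < c := by rw [hcdef]; linarith [hδA]
      have hδAnn : 0 ≤ δ * A := mul_nonneg hδpos.le (le_of_lt hA)
      have hδBnn : 0 ≤ δ * B2 := mul_nonneg hδpos.le (le_of_lt hB)
      have hfeas' : FeasN a b (fun i => t i / c) := by
        refine ⟨fun i => div_nonneg (ht i) hc.le, ?_, ?_⟩
        · have he : ∑ i, a i * (t i / c) = (∑ i, a i * t i)/c := by
            rw [Finset.sum_div]
            exact Finset.sum_congr rfl fun i _ => by ring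
          rw [he, le_div_iff₀ hc, one_mul]
          have : c ≤ 1 - δ*A := by rw [hcdef]; ring_nf; linarith
          linarith
        · have he : ∑ i, b i * (t i / c) = (∑ i, b i * t i)/c := by
            rw [Finset.sum_div]
            exact Finset.sum_congr rfl fun i _ => by ring
          rw [he, le_div_iff₀ hc, one_mul]
          have : c ≤ 1 - δ*B2 := by rw [hcdef]; ring_nf; linarith
          linarith
      have hge := hopt _ hfeas'
      rw [← Finset.sum_div] at hge
      have h6 := (le_div_iff₀ hc).1 hge
      calc S - δ*(S*(A+B2)) = S * c := by rw [hcdef]; ring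
        _ ≤ ∑ i, t i := h6
    have hKinv : (0:ℝ) < 1/(K:ℝ) := one_div_pos.2 hKR
    have hgrid : ∀ᶠ x : ℝ in atTop, ∀ i : Fin n, ∀ k ∈ Finset.range (K+1), 1 ≤ k →
        (P (X i ⁻¹' Set.Ici (x ^ ((k:ℝ)*δ)))).toReal ≤ x ^ (-((k:ℝ)*δ) + δ) := by
      rw [eventually_all]
      intro i
      rw [eventually_all_finset]
      intro k hk
      rcases Nat.lt_or_ge k 1 with hk1 | hk1
      · exact Filter.Eventually.of_forall fun x h => absurd h (by omega)
      · have hk1R : (1:ℝ) ≤ (k:ℝ) := by exact_mod_cast hk1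
        have hkpos : (0:ℝ) < (k:ℝ)*δ := by nlinarith
        have h2 := (tendsto_rpow_atTop hkpos).eventually (htail_up i (1/(K:ℝ)) hKinv)
        filter_upwards [h2, eventually_ge_atTop (1:ℝ)] with x hx hx1 _
        have hx0 : (0:ℝ) ≤ x := by linarith
        have hkK : (k:ℝ) ≤ K := by exact_mod_cast Nat.lt_succ_iff.1 (Finset.mem_range.1 hk)
        calc (P (X i ⁻¹' Set.Ici (x ^ ((k:ℝ)*δ)))).toReal
            ≤ (x ^ ((k:ℝ)*δ)) ^ (-1 + 1/(K:ℝ)) := hx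
          _ = x ^ ((k:ℝ)*δ * (-1 + 1/(K:ℝ))) := (Real.rpow_mul hx0 _ _).symm
          _ ≤ x ^ (-((k:ℝ)*δ) + δ) := by
              apply Real.rpow_le_rpow_of_exponent_le hx1
              have he : (k:ℝ)*δ*(-1+1/(K:ℝ)) = -((k:ℝ)*δ) + (k:ℝ)*δ/(K:ℝ) := by
                field_simp
              rw [he]
              have h7 : (k:ℝ)*δ/(K:ℝ) ≤ δ := by
                rw [div_le_iff₀ hKR]
                nlinarith
              linarith
    set V0 : Finset (Fin n → ℕ) := Fintype.piFinset (fun _ => Finset.range (K+1)) with hV0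
    set V : Finset (Fin n → ℕ) := V0.filter (fun v =>
        1 - δ*A ≤ ∑ i, a i * ((v i : ℝ)*δ) ∧ 1 - δ*B2 ≤ ∑ i, b i * ((v i : ℝ)*δ)) with hV
    have hev : ∀ᶠ x : ℝ in atTop,
        0 ≤ (P {ω | x < ∏ i, X i ω ^ a i ∧ x < ∏ i, X i ω ^ b i}).toReal / x ^ (ε - S) ∧
        (P {ω | x < ∏ i, X i ω ^ a i ∧ x < ∏ i, X i ω ^ b i}).toReal / x ^ (ε - S)
          ≤ ((n:ℝ) + V.card) * x ^ (-(ε/2)) := by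
      filter_upwards [hgrid, eventually_ge_atTop (2:ℝ)] with x hgr hx2
      have hx1 : (1:ℝ) < x := by linarith
      have hx0 : (0:ℝ) < x := by linarith
      set cc : (Fin n → ℕ) → Fin n → ℝ :=
        fun v i => if v i = 0 then 0 else x ^ ((v i : ℝ)*δ) with hcc
      set Cell : (Fin n → ℕ) → Set Ω := fun v => ⋂ i, X i ⁻¹' Set.Ici (cc v i) with hCell
      have hincl : {ω | x < ∏ i, X i ω ^ a i ∧ x < ∏ i, X i ω ^ b i} ⊆
          (⋃ i, X i ⁻¹' Set.Ici (x ^ ((K:ℝ)*δ))) ∪ (⋃ v ∈ V, Cell v) := by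
        intro ω hω
        by_cases hout : ∃ i, x ^ ((K:ℝ)*δ) ≤ X i ω
        · exact Or.inl (Set.mem_iUnion.2 ⟨hout.choose, hout.choose_spec⟩)
        · push_neg at hout
          right
          set kk : Fin n → ℕ := fun i =>
            if X i ω ≤ x ^ δ then 0 else ⌊Real.log (X i ω) / (δ * Real.log x)⌋₊ with hkk
          have hlogx : 0 < Real.log x := Real.log_pos hx1
          have hδlogx : 0 < δ * Real.log x := by positivity
          have hupb : ∀ i, X i ω ≤ x ^ (((kk i : ℝ)+1)*δ) := by
            intro i
            by_cases hsmall : X i ω ≤ x ^ δ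
            · have hz : kk i = 0 := by rw [hkk]; simp [hsmall]
              rw [hz]
              push_cast
              rw [zero_add, one_mul]
              exact hsmall
            · push_neg at hsmall
              have hXpos : 0 < X i ω := lt_trans (Real.rpow_pos_of_pos hx0 δ) hsmall
              have hkkd : kk i = ⌊Real.log (X i ω) / (δ * Real.log x)⌋₊ := by
                rw [hkk]; simp [not_le.2 hsmall]
              set r := Real.log (X i ω) / (δ * Real.log x) with hr
              have hr1 : r < (kk i : ℝ) + 1 := by rw [hkkd]; exact Nat.lt_floor_add_one r
              have hlt : Real.log (X i ω) < ((kk i:ℝ)+1)*(δ*Real.log x) := by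
                have he : Real.log (X i ω) = r * (δ*Real.log x) := by
                  rw [hr]; field_simp
                rw [he]
                exact mul_lt_mul_of_pos_right hr1 hδlogx
              calc X i ω = Real.exp (Real.log (X i ω)) := (Real.exp_log hXpos).symm
                _ ≤ Real.exp (((kk i:ℝ)+1)*δ*Real.log x) := by
                    apply Real.exp_le_exp.2
                    nlinarith [hlt]
                _ = x ^ (((kk i:ℝ)+1)*δ) := by
                    rw [Real.rpow_def_of_pos hx0]; ring_nf
          have hlowb : ∀ i, cc kk i ≤ X i ω := by
            intro i
            by_cases hz : kk i = 0
            · simp only [hcc]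
              rw [if_pos hz]
              exact hX0 i ω
            · have hsm : ¬ X i ω ≤ x ^ δ := by
                intro hcon
                apply hz
                rw [hkk]; simp [hcon]
              push_neg at hsm
              have hXpos : 0 < X i ω := lt_trans (Real.rpow_pos_of_pos hx0 δ) hsm
              have hkkd : kk i = ⌊Real.log (X i ω) / (δ * Real.log x)⌋₊ := by
                rw [hkk]; simp [not_le.2 hsm]
              have hr0 : 0 ≤ Real.log (X i ω) / (δ * Real.log x) := by
                apply div_nonneg _ hδlogx.le
                apply Real.log_nonneg
                calc (1:ℝ) ≤ x ^ δ := by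
                      calc (1:ℝ) = x ^ (0:ℝ) := (Real.rpow_zero x).symm
                        _ ≤ x ^ δ := Real.rpow_le_rpow_of_exponent_le hx1.le hδpos.le
                  _ ≤ X i ω := hsm.le
              have hfl : (kk i : ℝ) ≤ Real.log (X i ω) / (δ * Real.log x) := by
                rw [hkkd]; exact Nat.floor_le hr0
              have hle : (kk i : ℝ)*δ*Real.log x ≤ Real.log (X i ω) := by
                have := mul_le_mul_of_nonneg_right hfl hδlogx.le
                rw [div_mul_cancel₀ _ hδlogx.ne'] at this
                nlinarith [this]
              have : x ^ ((kk i : ℝ)*δ) ≤ X i ω := by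
                calc x ^ ((kk i : ℝ)*δ) = Real.exp ((kk i : ℝ)*δ*Real.log x) := by
                      rw [Real.rpow_def_of_pos hx0]; ring_nf
                  _ ≤ Real.exp (Real.log (X i ω)) := Real.exp_le_exp.2 hle
                  _ = X i ω := Real.exp_log hXpos
              simp only [hcc]
              rw [if_neg hz]
              exact this
          have hkkK : ∀ i, kk i ∈ Finset.range (K+1) := by
            intro i
            rw [Finset.mem_range, Nat.lt_succ_iff]
            by_cases hz : kk i = 0
            · rw [hz]; exact Nat.zero_le _
            · have hsm : ¬ X i ω ≤ x ^ δ := by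
                intro hcon; apply hz; rw [hkk]; simp [hcon]
              push_neg at hsm
              have hXpos : 0 < X i ω := lt_trans (Real.rpow_pos_of_pos hx0 δ) hsm
              have hkkd : kk i = ⌊Real.log (X i ω) / (δ * Real.log x)⌋₊ := by
                rw [hkk]; simp [not_le.2 hsm]
              have hlt : Real.log (X i ω) < (K:ℝ) * δ * Real.log x := by
                have h8 := Real.log_lt_log hXpos (hout i)
                rw [Real.log_rpow hx0] at h8
                exact h8
              have hrK : Real.log (X i ω) / (δ * Real.log x) < (K:ℝ) := by
                rw [div_lt_iff₀ hδlogx]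
                nlinarith [hlt]
              have hnn : 0 ≤ Real.log (X i ω) / (δ * Real.log x) := by
                apply div_nonneg _ hδlogx.le
                apply Real.log_nonneg
                calc (1:ℝ) = x ^ (0:ℝ) := (Real.rpow_zero x).symm
                  _ ≤ x ^ δ := Real.rpow_le_rpow_of_exponent_le hx1.le hδpos.le
                  _ ≤ X i ω := hsm.le
              rw [hkkd]
              exact le_of_lt ((Nat.floor_lt hnn).2 hrK)
          have hkey : ∀ (c : Fin n → ℝ), (∀ i, 0 ≤ c i) → x < ∏ i, X i ω ^ c i →
              1 - δ*(∑ i, c i) ≤ ∑ i, c i * ((kk i : ℝ)*δ) := by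
            intro c hc hprod
            have h1 : ∏ i, X i ω ^ c i ≤ ∏ i, (x ^ (((kk i:ℝ)+1)*δ)) ^ c i :=
              Finset.prod_le_prod (fun i _ => Real.rpow_nonneg (hX0 i ω) _)
                (fun i _ => Real.rpow_le_rpow (hX0 i ω) (hupb i) (hc i))
            have h2 : ∏ i, ((x:ℝ) ^ (((kk i:ℝ)+1)*δ)) ^ c i
                = x ^ (∑ i, ((kk i:ℝ)+1)*δ * c i) := by
              rw [Real.rpow_sum_of_pos hx0]
              exact Finset.prod_congr rfl fun i _ => (Real.rpow_mul hx0.le _ _).symm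
            have h3 : x < x ^ (∑ i, ((kk i:ℝ)+1)*δ*c i) := lt_of_lt_of_le hprod (h2 ▸ h1)
            have h4 : 1 < ∑ i, ((kk i:ℝ)+1)*δ*c i := by
              by_contra hcon
              push_neg at hcon
              have h9 := Real.rpow_le_rpow_of_exponent_le hx1.le hcon
              rw [Real.rpow_one] at h9
              linarith
            have h5 : ∑ i, ((kk i:ℝ)+1)*δ*c i
                = ∑ i, c i * ((kk i:ℝ)*δ) + δ*(∑ i, c i) := by
              rw [Finset.mul_sum, ← Finset.sum_add_distrib]
              exact Finset.sum_congr rfl fun i _ => by ring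
            rw [h5] at h4
            linarith
          have hmemV : kk ∈ V := by
            rw [hV, Finset.mem_filter]
            refine ⟨Fintype.mem_piFinset.2 hkkK, ?_, ?_⟩
            · rw [hAdef]; exact hkey a ha hω.1
            · rw [hB2def]; exact hkey b hb hω.2
          exact Set.mem_biUnion hmemV (Set.mem_iInter.2 hlowb)
      have hcellbound : ∀ v ∈ V, (P (Cell v)).toReal ≤ x ^ (-S + ε/2) := by
        intro v hv
        rw [hV, Finset.mem_filter] at hv
        have hv0 := hv.1
        have hva := hv.2.1
        have hvb := hv.2.2
        have hvK : ∀ i, v i ≤ K := fun i =>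
          Nat.lt_succ_iff.1 (Finset.mem_range.1 (Fintype.mem_piFinset.1 hv0 i))
        have e1 : (P (Cell v)).toReal = ∏ i, (P (X i ⁻¹' Set.Ici (cc v i))).toReal := by
          simp only [hCell]
          rw [hindep' (cc v), ENNReal.toReal_prod]
        have e2 : ∀ i, (P (X i ⁻¹' Set.Ici (cc v i))).toReal ≤ x ^ (-((v i:ℝ)*δ) + δ) := by
          intro i
          by_cases hz : v i = 0
          · calc (P (X i ⁻¹' Set.Ici (cc v i))).toReal ≤ 1 := tail_le_one _
              _ ≤ x ^ (-(((v i):ℝ)*δ)+δ) := by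
                  rw [hz]
                  push_cast
                  rw [show (-(0*δ)+δ : ℝ) = δ by ring]
                  calc (1:ℝ) = x ^ (0:ℝ) := (Real.rpow_zero x).symm
                    _ ≤ x ^ δ := Real.rpow_le_rpow_of_exponent_le hx1.le hδpos.le
          · have h1k : 1 ≤ v i := Nat.one_le_iff_ne_zero.2 hz
            have h9 := hgr i (v i) (Finset.mem_range.2 (Nat.lt_succ_of_le (hvK i))) h1k
            simp only [hcc]
            rw [if_neg hz]
            exact h9
        have e3 : ∏ i, (x:ℝ) ^ (-((v i:ℝ)*δ)+δ) = x ^ (∑ i, (-((v i:ℝ)*δ)+δ)) :=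
          (Real.rpow_sum_of_pos hx0 _ _).symm
        have e4 : ∑ i, (-((v i:ℝ)*δ)+δ) = -(∑ i, (v i:ℝ)*δ) + n*δ := by
          rw [Finset.sum_add_distrib, Finset.sum_neg_distrib]
          simp [Finset.sum_const, Finset.card_univ, mul_comm]
        have e5 : S - δ*(S*(A+B2)) ≤ ∑ i, (v i:ℝ)*δ :=
          hLP (fun i => (v i:ℝ)*δ) (fun i => by positivity) hva hvb
        calc (P (Cell v)).toReal = ∏ i, (P (X i ⁻¹' Set.Ici (cc v i))).toReal := e1
          _ ≤ ∏ i, (x:ℝ) ^ (-((v i:ℝ)*δ)+δ) :=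
              Finset.prod_le_prod (fun i _ => ENNReal.toReal_nonneg) (fun i _ => e2 i)
          _ = x ^ (∑ i, (-((v i:ℝ)*δ)+δ)) := e3
          _ ≤ x ^ (-S + ε/2) := by
              apply Real.rpow_le_rpow_of_exponent_le hx1.le
              rw [e4]
              have h10 : δ*(S*(A+B2)) + (n:ℝ)*δ = δ*(S*(A+B2)+n) := by ring
              linarith [hδε2, e5]
      have houtb : ∀ i : Fin n, (P (X i ⁻¹' Set.Ici (x ^ ((K:ℝ)*δ)))).toReal
          ≤ x ^ (-S + ε/2) := by
        intro i
        have h9 := hgr i K (Finset.mem_range.2 (Nat.lt_succ_self K)) hK1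
        calc (P (X i ⁻¹' Set.Ici (x ^ ((K:ℝ)*δ)))).toReal
            ≤ x ^ (-((K:ℝ)*δ) + δ) := h9
          _ ≤ x ^ (-S + ε/2) := by
              apply Real.rpow_le_rpow_of_exponent_le hx1.le
              have : M = S + ε + 1 := hMdef
              linarith [hKδ, hδhalf, hε]
      set U1 : Set Ω := ⋃ i, X i ⁻¹' Set.Ici (x ^ ((K:ℝ)*δ)) with hU1
      set U2 : Set Ω := ⋃ v ∈ V, Cell v with hU2
      have hsumb : (P {ω | x < ∏ i, X i ω ^ a i ∧ x < ∏ i, X i ω ^ b i}).toReal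
          ≤ ((n:ℝ) + V.card) * x ^ (-S+ε/2) := by
        have m1 : P {ω | x < ∏ i, X i ω ^ a i ∧ x < ∏ i, X i ω ^ b i}
            ≤ ∑ i, P (X i ⁻¹' Set.Ici (x ^ ((K:ℝ)*δ))) + ∑ v ∈ V, P (Cell v) := by
          calc P {ω | x < ∏ i, X i ω ^ a i ∧ x < ∏ i, X i ω ^ b i}
              ≤ P (U1 ∪ U2) := measure_mono hincl
            _ ≤ P U1 + P U2 := measure_union_le _ _
            _ ≤ _ := add_le_add (measure_iUnion_fintype_le _ _)
                (measure_biUnion_finset_le _ _)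
        have hne1 : (∑ i, P (X i ⁻¹' Set.Ici (x ^ ((K:ℝ)*δ)))) ≠ ⊤ :=
          ENNReal.sum_ne_top.2 fun i _ => measure_ne_top _ _
        have hne2 : (∑ v ∈ V, P (Cell v)) ≠ ⊤ :=
          ENNReal.sum_ne_top.2 fun v _ => measure_ne_top _ _
        have m2 := ENNReal.toReal_mono (by
            exact ENNReal.add_ne_top.2 ⟨hne1, hne2⟩) m1
        rw [ENNReal.toReal_add hne1 hne2, ENNReal.toReal_sum (fun i _ => measure_ne_top _ _),
          ENNReal.toReal_sum (fun v _ => measure_ne_top _ _)] at m2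
        have m3 : ∑ i, (P (X i ⁻¹' Set.Ici (x ^ ((K:ℝ)*δ)))).toReal
            ≤ (n:ℝ) * x ^ (-S+ε/2) := by
          have := Finset.sum_le_card_nsmul Finset.univ _ _ (fun i _ => houtb i)
          rwa [Finset.card_univ, Fintype.card_fin, nsmul_eq_mul] at this
        have m4 : ∑ v ∈ V, (P (Cell v)).toReal ≤ (V.card : ℝ) * x ^ (-S+ε/2) := by
          have := Finset.sum_le_card_nsmul V _ _ hcellbound
          rwa [nsmul_eq_mul] at this
        calc (P {ω | x < ∏ i, X i ω ^ a i ∧ x < ∏ i, X i ω ^ b i}).toReal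
            ≤ ∑ i, (P (X i ⁻¹' Set.Ici (x ^ ((K:ℝ)*δ)))).toReal
              + ∑ v ∈ V, (P (Cell v)).toReal := m2
          _ ≤ (n:ℝ) * x ^ (-S+ε/2) + (V.card : ℝ) * x ^ (-S+ε/2) := add_le_add m3 m4
          _ = ((n:ℝ) + V.card) * x ^ (-S+ε/2) := by ring
      refine ⟨div_nonneg ENNReal.toReal_nonneg (Real.rpow_nonneg hx0.le _), ?_⟩
      have hpow : (0:ℝ) < x ^ (ε - S) := Real.rpow_pos_of_pos hx0 _
      calc (P {ω | x < ∏ i, X i ω ^ a i ∧ x < ∏ i, X i ω ^ b i}).toReal / x ^ (ε - S)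
          ≤ (((n:ℝ) + V.card) * x ^ (-S+ε/2)) / x ^ (ε-S) :=
            (div_le_div_iff_of_pos_right hpow).2 hsumb
        _ = ((n:ℝ) + V.card) * x ^ (-(ε/2)) := by
            rw [mul_div_assoc, ← Real.rpow_sub hx0,
              show (-S+ε/2 - (ε-S)) = -(ε/2) by ring]
    have hlim : Tendsto (fun x : ℝ => ((n:ℝ) + V.card) * x ^ (-(ε/2))) atTop (nhds 0) := by
      have := (tendsto_rpow_neg_atTop (by positivity : (0:ℝ) < ε/2)).const_mul ((n:ℝ) + V.card)
      simpa using this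
    exact squeeze_zero' (hev.mono fun x h => h.1) (hev.mono fun x h => h.2) hlim
  · -- lower bound part
    set δ : ℝ := ε / (4 * n) with hδdef
    have hδ : 0 < δ := by positivity
    set δ' : ℝ := ε / (4 * (S + ε/4)) with hδ'def
    have hδ' : 0 < δ' := by positivity
    have hper : ∀ i : Fin n, ∀ᶠ x : ℝ in atTop,
        (x ^ (κ i + δ)) ^ (-1 - δ') ≤ (P (X i ⁻¹' Set.Ici (x ^ (κ i + δ)))).toReal := by
      intro i
      have hpos : 0 < κ i + δ := by have := hκ0 i; linarith
      exact (tendsto_rpow_atTop hpos).eventually (htail_lo i δ' hδ')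
    have hall := eventually_all.2 hper
    have hev : ∀ᶠ x : ℝ in atTop,
        0 ≤ x ^ (-ε - S) /
          (P {ω | x < ∏ i, X i ω ^ a i ∧ x < ∏ i, X i ω ^ b i}).toReal ∧
        x ^ (-ε - S) /
          (P {ω | x < ∏ i, X i ω ^ a i ∧ x < ∏ i, X i ω ^ b i}).toReal ≤ x ^ (-(ε/2)) := by
      filter_upwards [hall, eventually_ge_atTop (2:ℝ)] with x hx hx2
      have hx1 : (1:ℝ) < x := by linarith
      have hx0 : (0:ℝ) < x := by linarith
      have hsub : (⋂ i, X i ⁻¹' Set.Ici (x ^ (κ i + δ))) ⊆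
          {ω | x < ∏ i, X i ω ^ a i ∧ x < ∏ i, X i ω ^ b i} := by
        intro ω hω
        rw [Set.mem_iInter] at hω
        have key : ∀ (c : Fin n → ℝ), (∀ i, 0 ≤ c i) → (1 ≤ ∑ i, c i * κ i) →
            (0 < ∑ i, c i) → x < ∏ i, X i ω ^ c i := by
          intro c hc hc1 hcs
          have h1 : ∏ i, (x ^ (κ i + δ)) ^ c i ≤ ∏ i, X i ω ^ c i := by
            apply Finset.prod_le_prod
            · intro i _; positivity
            · intro i _
              exact Real.rpow_le_rpow (by positivity) (hω i) (hc i)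
          have h2 : ∏ i, (x ^ (κ i + δ)) ^ c i = x ^ (∑ i, (κ i + δ) * c i) := by
            rw [Real.rpow_sum_of_pos hx0]
            exact Finset.prod_congr rfl fun i _ => (Real.rpow_mul hx0.le _ _).symm
          have h3 : 1 < ∑ i, (κ i + δ) * c i := by
            have he : ∑ i, (κ i + δ) * c i = ∑ i, c i * κ i + δ * ∑ i, c i := by
              rw [Finset.mul_sum, ← Finset.sum_add_distrib]
              exact Finset.sum_congr rfl fun i _ => by ring
            rw [he]
            nlinarith [mul_pos hδ hcs]
          calc x = x ^ (1:ℝ) := (Real.rpow_one x).symm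
            _ < x ^ (∑ i, (κ i + δ) * c i) := Real.rpow_lt_rpow_of_exponent_lt hx1 h3
            _ = ∏ i, (x ^ (κ i + δ)) ^ c i := h2.symm
            _ ≤ ∏ i, X i ω ^ c i := h1
        exact ⟨key a ha hκa hA, key b hb hκb hB⟩
      have hPgt : x ^ (-(S + ε/2)) ≤
          (P {ω | x < ∏ i, X i ω ^ a i ∧ x < ∏ i, X i ω ^ b i}).toReal := by
        have e1 : (P (⋂ i, X i ⁻¹' Set.Ici (x ^ (κ i + δ)))).toReal
            = ∏ i, (P (X i ⁻¹' Set.Ici (x ^ (κ i + δ)))).toReal := by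
          rw [hindep' _, ENNReal.toReal_prod]
        have e2 : ∏ i, ((x:ℝ) ^ (κ i + δ)) ^ (-1 - δ')
            ≤ ∏ i, (P (X i ⁻¹' Set.Ici (x ^ (κ i + δ)))).toReal :=
          Finset.prod_le_prod (fun i _ => by positivity) (fun i _ => hx i)
        have e3 : ∏ i, ((x:ℝ) ^ (κ i + δ)) ^ (-1 - δ') = x ^ (-(S + ε/2)) := by
          have hc : ∀ i ∈ Finset.univ, ((x:ℝ) ^ (κ i + δ)) ^ (-1-δ')
              = x ^ ((κ i + δ) * (-1-δ')) := fun i _ => (Real.rpow_mul hx0.le _ _).symm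
          rw [Finset.prod_congr rfl hc, ← Real.rpow_sum_of_pos hx0]
          congr 1
          have hsum : ∑ i, (κ i + δ) * (-1-δ') = (S + n*δ) * (-1-δ') := by
            rw [← Finset.sum_mul]
            congr 1
            rw [Finset.sum_add_distrib, ← hSdef]
            simp [Finset.sum_const, Finset.card_univ, mul_comm]
          rw [hsum]
          have h4 : (n:ℝ) * δ = ε/4 := by rw [hδdef]; field_simp
          have h5 : (S + ε/4) * δ' = ε/4 := by
            rw [hδ'def]; field_simp
          linear_combination (-1-δ') * h4 - h5
        calc x ^ (-(S + ε/2)) = ∏ i, ((x:ℝ) ^ (κ i + δ)) ^ (-1 - δ') := e3.symm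
          _ ≤ ∏ i, (P (X i ⁻¹' Set.Ici (x ^ (κ i + δ)))).toReal := e2
          _ = (P (⋂ i, X i ⁻¹' Set.Ici (x ^ (κ i + δ)))).toReal := e1.symm
          _ ≤ _ := ENNReal.toReal_mono (measure_ne_top _ _) (measure_mono hsub)
      have hd : 0 < x ^ (-(S + ε/2)) := Real.rpow_pos_of_pos hx0 _
      refine ⟨div_nonneg (Real.rpow_nonneg hx0.le _) ENNReal.toReal_nonneg, ?_⟩
      calc x ^ (-ε - S) /
            (P {ω | x < ∏ i, X i ω ^ a i ∧ x < ∏ i, X i ω ^ b i}).toReal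
          ≤ x ^ (-ε - S) / x ^ (-(S + ε/2)) :=
            div_le_div_of_nonneg_left (Real.rpow_nonneg hx0.le _) hd hPgt
        _ = x ^ (-(ε/2)) := by
            rw [← Real.rpow_sub hx0, show (-ε - S - -(S + ε/2)) = -(ε/2) by ring]
    exact squeeze_zero' (hev.mono fun x h => h.1) (hev.mono fun x h => h.2)
      (tendsto_rpow_neg_atTop (by positivity))
end

section
/- Let X_i, i ∈ ℕ, be i.i.d. nonnegative random variables, regularly varying with index −1, and let α_i, β_i ≥ 0 satisfy sup_i α_i > 0, sup_i β_i > 0, Σ α_i < ∞, Σ β_i < ∞. Then: (a) Π_{i=1}^n X_i^{α_i} and Π_{i=1}^n X_i^{β_i} converge almost surely (in [0,∞)) as n → ∞; (b) the infinite-dimensional linear program 'minimize Σ_{i=1}^∞ κ_i subject to Σ α_i κ_i ≥ 1, Σ β_i κ_i ≥ 1, κ_i ≥ 0' has an optimal solution, and every optimal solution has κ_i = 0 for all i > n for some fixed finite n depending only on (α_i), (β_i); hence the problem is equivalent to a finite-dimensional linear program. -/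
open MeasureTheory ProbabilityTheory Filter Topology
open scoped ENNReal

/-- feasibility for the infinite-dimensional linear program (κ valued in [0,∞]) -/
def FeasInf (a b : ℕ → ℝ) (κ : ℕ → ℝ≥0∞) : Prop :=
  1 ≤ ∑' i, ENNReal.ofReal (a i) * κ i ∧ 1 ≤ ∑' i, ENNReal.ofReal (b i) * κ i

lemma tail_bound {Ω : Type*} [MeasurableSpace Ω] (P : Measure Ω) [IsProbabilityMeasure P]
    (Y : Ω → ℝ) (hrv : RegVarNegOne P Y) :
    ∃ x₀ : ℝ, 1 ≤ x₀ ∧ ∀ k : ℕ, P {ω | 2 ^ k * x₀ < Y ω} ≤ ENNReal.ofReal (3/4) ^ k := by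
  have h2 := hrv 2 two_pos
  have hev : ∀ᶠ x in atTop,
      (P {ω | 2 * x < Y ω}).toReal / (P {ω | x < Y ω}).toReal < 3/4 :=
    h2.eventually_lt_const (by norm_num)
  obtain ⟨x₁, hx₁⟩ := hev.exists_forall_of_atTop
  refine ⟨max x₁ 1, le_max_right _ _, ?_⟩
  set x₀ := max x₁ 1 with hx₀def
  have hx₀1 : (1:ℝ) ≤ x₀ := le_max_right _ _
  have step : ∀ x : ℝ, x₀ ≤ x →
      P {ω | 2 * x < Y ω} ≤ ENNReal.ofReal (3/4) * P {ω | x < Y ω} := by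
    intro x hx
    have hx1 : (1:ℝ) ≤ x := le_trans hx₀1 hx
    have hr := hx₁ x (le_trans (le_max_left _ _) hx)
    by_cases h0 : (P {ω | x < Y ω}).toReal = 0
    · have hm : P {ω | x < Y ω} = 0 :=
        ((ENNReal.toReal_eq_zero_iff _).1 h0).resolve_right (measure_ne_top P _)
      have hsub : {ω | 2 * x < Y ω} ⊆ {ω | x < Y ω} := by
        intro ω hω
        simp only [Set.mem_setOf_eq] at *
        nlinarith
      calc P {ω | 2 * x < Y ω} ≤ P {ω | x < Y ω} := measure_mono hsub
        _ = 0 := hm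
        _ ≤ _ := zero_le
    · have hpos : 0 < (P {ω | x < Y ω}).toReal :=
        lt_of_le_of_ne ENNReal.toReal_nonneg (Ne.symm h0)
      have hlt : (P {ω | 2 * x < Y ω}).toReal ≤ 3/4 * (P {ω | x < Y ω}).toReal := by
        have := (div_lt_iff₀ hpos).1 hr
        linarith
      have h := ENNReal.ofReal_le_ofReal hlt
      rwa [ENNReal.ofReal_toReal (measure_ne_top _ _), ENNReal.ofReal_mul (by norm_num),
        ENNReal.ofReal_toReal (measure_ne_top _ _)] at h
  intro k
  induction k with
  | zero =>
    simpa using prob_le_one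
  | succ k ih =>
    have hx₀pos : (0:ℝ) < x₀ := lt_of_lt_of_le one_pos hx₀1
    have hx : x₀ ≤ 2 ^ k * x₀ := by
      nlinarith [one_le_pow₀ (M₀ := ℝ) (a := 2) (by norm_num : (1:ℝ) ≤ 2) (n := k)]
    have hset : {ω | 2 ^ (k+1) * x₀ < Y ω} = {ω | 2 * (2 ^ k * x₀) < Y ω} := by
      congr 1
      ext ω
      have : (2:ℝ) ^ (k+1) * x₀ = 2 * (2 ^ k * x₀) := by ring
      rw [this]
    calc P {ω | 2 ^ (k+1) * x₀ < Y ω} = P {ω | 2 * (2 ^ k * x₀) < Y ω} := by rw [hset]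
      _ ≤ ENNReal.ofReal (3/4) * P {ω | 2 ^ k * x₀ < Y ω} := step _ hx
      _ ≤ ENNReal.ofReal (3/4) * ENNReal.ofReal (3/4) ^ k := mul_le_mul_right ih _
      _ = ENNReal.ofReal (3/4) ^ (k+1) := (pow_succ' _ _).symm

lemma lplus_le (x₀ : ℝ) (hx₀ : 1 ≤ x₀) (x : ℝ) (hx : 0 ≤ x) :
    ENNReal.ofReal (max (Real.log x) 0) ≤ ENNReal.ofReal (Real.log x₀)
      + ENNReal.ofReal (Real.log 2) * ∑' k : ℕ, (if 2 ^ k * x₀ < x then (1:ℝ≥0∞) else 0) := by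
  by_cases hxx : x ≤ x₀
  · have h1 : max (Real.log x) 0 ≤ Real.log x₀ := by
      refine max_le ?_ (Real.log_nonneg hx₀)
      rcases eq_or_lt_of_le hx with h0 | h0
      · rw [← h0, Real.log_zero]
        exact Real.log_nonneg hx₀
      · exact Real.log_le_log h0 hxx
    exact le_trans (ENNReal.ofReal_le_ofReal h1) le_self_add
  push_neg at hxx
  have hxpos : 0 < x := lt_of_le_of_lt (le_trans zero_le_one hx₀) hxx
  have hx₀pos : 0 < x₀ := lt_of_lt_of_le one_pos hx₀
  have hex : ∃ k : ℕ, ¬ (2 ^ k * x₀ < x) := by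
    obtain ⟨k, hk⟩ := pow_unbounded_of_one_lt x (one_lt_two (α := ℝ))
    refine ⟨k, not_lt.2 ?_⟩
    nlinarith [pow_pos (two_pos (α := ℝ)) k]
  set K := Nat.find hex with hK
  have hKspec : ¬(2 ^ K * x₀ < x) := Nat.find_spec hex
  have hKmin : ∀ j, j < K → 2 ^ j * x₀ < x := fun j hj => not_not.1 (Nat.find_min hex hj)
  have hiff : ∀ k : ℕ, (2 ^ k * x₀ < x) ↔ k < K := by
    intro k
    constructor
    · intro h
      by_contra hk
      push_neg at hk
      have h2 : (2:ℝ) ^ K ≤ 2 ^ k := pow_le_pow_right₀ one_le_two hk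
      exact hKspec (lt_of_le_of_lt (by nlinarith) h)
    · exact hKmin k
  have htsum : (∑' k : ℕ, if 2 ^ k * x₀ < x then (1:ℝ≥0∞) else 0) = K := by
    have hcong : ∀ k : ℕ, (if 2 ^ k * x₀ < x then (1:ℝ≥0∞) else 0)
        = if k < K then 1 else 0 := by
      intro k
      by_cases h : k < K
      · rw [if_pos h, if_pos ((hiff k).2 h)]
      · rw [if_neg h, if_neg (fun hh => h ((hiff k).1 hh))]
    rw [tsum_congr hcong, tsum_eq_sum (s := Finset.range K)
      (fun k hk => if_neg (by simpa using hk))]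
    have h1 : ∑ k ∈ Finset.range K, (if k < K then (1:ℝ≥0∞) else 0)
        = ∑ k ∈ Finset.range K, 1 :=
      Finset.sum_congr rfl fun k hk => if_pos (Finset.mem_range.1 hk)
    rw [h1]
    simp
  have hxK : x ≤ 2 ^ K * x₀ := not_lt.1 hKspec
  have hlog : max (Real.log x) 0 ≤ (K : ℝ) * Real.log 2 + Real.log x₀ := by
    have h2 : Real.log x ≤ (K : ℝ) * Real.log 2 + Real.log x₀ := by
      calc Real.log x ≤ Real.log (2 ^ K * x₀) := Real.log_le_log hxpos hxK
        _ = (K : ℝ) * Real.log 2 + Real.log x₀ := by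
            rw [Real.log_mul (by positivity) (ne_of_gt hx₀pos), Real.log_pow]
    refine max_le h2 ?_
    have := Real.log_nonneg hx₀
    have h2' : (0:ℝ) ≤ (K : ℝ) * Real.log 2 := by positivity
    linarith
  rw [htsum]
  calc ENNReal.ofReal (max (Real.log x) 0)
      ≤ ENNReal.ofReal ((K : ℝ) * Real.log 2 + Real.log x₀) := ENNReal.ofReal_le_ofReal hlog
    _ = ENNReal.ofReal (Real.log x₀) + ENNReal.ofReal ((K : ℝ) * Real.log 2) := by
        rw [ENNReal.ofReal_add (by positivity) (Real.log_nonneg hx₀), add_comm]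
    _ = ENNReal.ofReal (Real.log x₀) + ENNReal.ofReal (Real.log 2) * (K : ℝ≥0∞) := by
        rw [ENNReal.ofReal_mul (by positivity), ENNReal.ofReal_natCast, mul_comm]
  
lemma converge_of_summable (x : ℕ → ℝ) (hx : ∀ i, 0 ≤ x i) (c : ℕ → ℝ) (hc : ∀ i, 0 ≤ c i)
    (hs : Summable (fun i => c i * max (Real.log (x i)) 0)) :
    ∃ L : ℝ, Tendsto (fun n => ∏ i ∈ Finset.range n, x i ^ c i) atTop (𝓝 L) := by
  set f : ℕ → ℝ := fun i => (max (x i) 1) ^ (c i) with hf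
  set g : ℕ → ℝ := fun i => (min (x i) 1) ^ (c i) with hg
  have hfg : ∀ i, x i ^ c i = f i * g i := by
    intro i
    show x i ^ c i = (max (x i) 1) ^ (c i) * (min (x i) 1) ^ (c i)
    rw [← Real.mul_rpow (le_trans zero_le_one (le_max_right _ _)) (le_min (hx i) zero_le_one)]
    congr 1
    rcases le_total (x i) 1 with h | h
    · rw [max_eq_right h, min_eq_left h]; ring
    · rw [max_eq_left h, min_eq_right h]; ring
  have hprod : ∀ n, ∏ i ∈ Finset.range n, x i ^ c i
      = (∏ i ∈ Finset.range n, f i) * ∏ i ∈ Finset.range n, g i := by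
    intro n
    rw [← Finset.prod_mul_distrib]
    exact Finset.prod_congr rfl fun i _ => hfg i
  have hlogmax : ∀ i, Real.log (max (x i) 1) = max (Real.log (x i)) 0 := by
    intro i
    rcases le_total (x i) 1 with h | h
    · rw [max_eq_right h, Real.log_one]
      symm
      rw [max_eq_right (Real.log_nonpos (hx i) h)]
    · rw [max_eq_left h, max_eq_left (Real.log_nonneg h)]
  have hfexp : ∀ i, f i = Real.exp (c i * max (Real.log (x i)) 0) := by
    intro i
    have hpos : 0 < max (x i) 1 := lt_of_lt_of_le one_pos (le_max_right _ _)
    show (max (x i) 1) ^ (c i) = Real.exp (c i * max (Real.log (x i)) 0)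
    rw [Real.rpow_def_of_pos hpos, hlogmax, mul_comm]
  have hA : Tendsto (fun n => ∏ i ∈ Finset.range n, f i) atTop
      (𝓝 (Real.exp (∑' i, c i * max (Real.log (x i)) 0))) := by
    have h1 : (fun n => ∏ i ∈ Finset.range n, f i)
        = fun n => Real.exp (∑ i ∈ Finset.range n, c i * max (Real.log (x i)) 0) := by
      funext n
      rw [Real.exp_sum]
      exact Finset.prod_congr rfl fun i _ => hfexp i
    rw [h1]
    exact (Real.continuous_exp.tendsto _).comp hs.hasSum.tendsto_sum_nat
  have hg01 : ∀ i, 0 ≤ g i ∧ g i ≤ 1 := by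
    intro i
    have h0 : 0 ≤ min (x i) 1 := le_min (hx i) zero_le_one
    exact ⟨Real.rpow_nonneg h0 _, Real.rpow_le_one h0 (min_le_right _ _) (hc i)⟩
  have hBanti : Antitone (fun n => ∏ i ∈ Finset.range n, g i) := by
    apply antitone_nat_of_succ_le
    intro n
    rw [Finset.prod_range_succ]
    exact mul_le_of_le_one_right (Finset.prod_nonneg fun i _ => (hg01 i).1) (hg01 n).2
  have hBbdd : BddBelow (Set.range fun n => ∏ i ∈ Finset.range n, g i) :=
    ⟨0, by rintro _ ⟨n, rfl⟩; exact Finset.prod_nonneg fun i _ => (hg01 i).1⟩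
  have hB := tendsto_atTop_ciInf hBanti hBbdd
  have heq : (fun n => ∏ i ∈ Finset.range n, x i ^ c i)
      = fun n => (∏ i ∈ Finset.range n, f i) * ∏ i ∈ Finset.range n, g i := funext hprod
  exact ⟨_, heq ▸ hA.mul hB⟩


lemma aux_summable {Ω : Type*} [MeasurableSpace Ω] (P : Measure Ω)
    [IsProbabilityMeasure P] (X : ℕ → Ω → ℝ)
    (hXmeas : ∀ i, Measurable (X i))
    (hX0 : ∀ i ω, 0 ≤ X i ω)
    (hid : ∀ i, IdentDistrib (X i) (X 0) P P)
    (hrv : RegVarNegOne P (X 0))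
    (a : ℕ → ℝ) (ha : ∀ i, 0 ≤ a i) (hasum : Summable a) :
    ∀ᵐ ω ∂P, Summable (fun i => a i * max (Real.log (X i ω)) 0) := by
  classical
  set lp : ℝ → ℝ≥0∞ := fun x => ENNReal.ofReal (max (Real.log x) 0) with hlp
  have hlpm : Measurable lp := (Real.measurable_log.max measurable_const).ennreal_ofReal
  obtain ⟨x₀, hx₀1, htail⟩ := tail_bound P (X 0) hrv
  -- finiteness of I = ∫⁻ lp(X 0)
  have hIfin : ∫⁻ ω, lp (X 0 ω) ∂P ≠ ⊤ := by
    have hmeas : ∀ k : ℕ, Measurable (fun ω => if 2 ^ k * x₀ < X 0 ω then (1:ℝ≥0∞) else 0) := by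
      intro k
      exact Measurable.ite (measurableSet_lt measurable_const (hXmeas 0)) measurable_const
        measurable_const
    have hbound : ∫⁻ ω, lp (X 0 ω) ∂P
        ≤ ∫⁻ ω, (ENNReal.ofReal (Real.log x₀)
          + ENNReal.ofReal (Real.log 2) * ∑' k : ℕ, (if 2 ^ k * x₀ < X 0 ω then (1:ℝ≥0∞) else 0)) ∂P :=
      lintegral_mono fun ω => lplus_le x₀ hx₀1 (X 0 ω) (hX0 0 ω)
    have heval : ∫⁻ ω, (ENNReal.ofReal (Real.log x₀)
          + ENNReal.ofReal (Real.log 2) * ∑' k : ℕ, (if 2 ^ k * x₀ < X 0 ω then (1:ℝ≥0∞) else 0)) ∂P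
        = ENNReal.ofReal (Real.log x₀)
          + ENNReal.ofReal (Real.log 2) * ∑' k : ℕ, P {ω | 2 ^ k * x₀ < X 0 ω} := by
      rw [lintegral_add_left measurable_const, lintegral_const]
      simp only [measure_univ, mul_one]
      congr 1
      rw [lintegral_const_mul _ (Measurable.ennreal_tsum hmeas)]
      congr 1
      rw [lintegral_tsum (fun k => (hmeas k).aemeasurable)]
      refine tsum_congr fun k => ?_
      have : (fun ω => if 2 ^ k * x₀ < X 0 ω then (1:ℝ≥0∞) else 0)
          = {ω | 2 ^ k * x₀ < X 0 ω}.indicator (fun _ => 1) := by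
        funext ω
        rw [Set.indicator_apply]
        rfl
      rw [this]
      exact lintegral_indicator_one (measurableSet_lt measurable_const (hXmeas 0))
    have hgeo : (∑' k : ℕ, P {ω | 2 ^ k * x₀ < X 0 ω}) ≤ (1 - ENNReal.ofReal (3/4))⁻¹ := by
      rw [← ENNReal.tsum_geometric]
      exact ENNReal.tsum_le_tsum htail
    refine ne_top_of_le_ne_top ?_ (le_trans hbound (le_of_eq heval))
    have h34 : (1 - ENNReal.ofReal (3/4))⁻¹ ≠ ⊤ := by
      rw [Ne, ENNReal.inv_eq_top, tsub_eq_zero_iff_le]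
      intro h
      have := ENNReal.one_le_ofReal.1 h
      norm_num at this
    exact ENNReal.add_ne_top.2 ⟨ENNReal.ofReal_ne_top,
      ENNReal.mul_ne_top ENNReal.ofReal_ne_top (ne_top_of_le_ne_top h34 hgeo)⟩
  have hIeq : ∀ i, ∫⁻ ω, lp (X i ω) ∂P = ∫⁻ ω, lp (X 0 ω) ∂P := by
    intro i
    rw [← lintegral_map hlpm (hXmeas i), ← lintegral_map hlpm (hXmeas 0), (hid i).map_eq]
  have hmeasJ : ∀ i : ℕ, Measurable (fun ω => ENNReal.ofReal (a i) * lp (X i ω)) :=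
    fun i => (hlpm.comp (hXmeas i)).const_mul _
  have hJ : ∫⁻ ω, ∑' i, ENNReal.ofReal (a i) * lp (X i ω) ∂P ≠ ⊤ := by
    rw [lintegral_tsum (fun i => (hmeasJ i).aemeasurable)]
    have : ∀ i, ∫⁻ ω, ENNReal.ofReal (a i) * lp (X i ω) ∂P
        = ENNReal.ofReal (a i) * ∫⁻ ω, lp (X 0 ω) ∂P := by
      intro i
      rw [lintegral_const_mul _ (show Measurable fun ω => lp (X i ω) from hlpm.comp (hXmeas i)), hIeq i]
    rw [tsum_congr this, ENNReal.tsum_mul_right, ← ENNReal.ofReal_tsum_of_nonneg ha hasum]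
    exact ENNReal.mul_ne_top ENNReal.ofReal_ne_top hIfin
  have hae := ae_lt_top (Measurable.ennreal_tsum hmeasJ) hJ
  filter_upwards [hae] with ω hω
  have hsum := ENNReal.summable_toReal hω.ne
  have : (fun i => (ENNReal.ofReal (a i) * lp (X i ω)).toReal)
      = fun i => a i * max (Real.log (X i ω)) 0 := by
    funext i
    rw [hlp, ← ENNReal.ofReal_mul (ha i),
      ENNReal.toReal_ofReal (mul_nonneg (ha i) (le_max_right _ _))]
  rwa [this] at hsum

lemma aux_lp (a b : ℕ → ℝ) (ha : ∀ i, 0 ≤ a i) (hb : ∀ i, 0 ≤ b i)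
    (hamax : ∃ i, 0 < a i) (hbmax : ∃ i, 0 < b i)
    (hasum : Summable a) (hbsum : Summable b) :
    (∃ n : ℕ,
      (∃ κ : ℕ → ℝ≥0∞, FeasInf a b κ ∧
        (∀ κ' : ℕ → ℝ≥0∞, FeasInf a b κ' → ∑' i, κ i ≤ ∑' i, κ' i)) ∧
      (∀ κ' : ℕ → ℝ≥0∞, FeasInf a b κ' →
        (∀ κ'' : ℕ → ℝ≥0∞, FeasInf a b κ'' → ∑' i, κ' i ≤ ∑' i, κ'' i) →
        ∀ i, n < i → κ' i = 0)) := by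
  classical
  obtain ⟨p, hA⟩ := hamax
  obtain ⟨q, hB⟩ := hbmax
  set A := a p with hAdef
  set B := b q with hBdef
  set τ : ℝ := 1 / (2 / A + 2 / B) with hτdef
  have hτpos : 0 < τ := by positivity
  have hAE : ENNReal.ofReal A ≠ 0 := by simp [ENNReal.ofReal_eq_zero, not_le, hA]
  have hAT : ENNReal.ofReal A ≠ ⊤ := ENNReal.ofReal_ne_top
  have hBE : ENNReal.ofReal B ≠ 0 := by simp [ENNReal.ofReal_eq_zero, not_le, hB]
  have hBT : ENNReal.ofReal B ≠ ⊤ := ENNReal.ofReal_ne_top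
  -- choose n
  have hato : Tendsto a atTop (𝓝 0) := hasum.tendsto_atTop_zero
  have hbto : Tendsto b atTop (𝓝 0) := hbsum.tendsto_atTop_zero
  have hev : ∀ᶠ i in atTop, a i < τ ∧ b i < τ :=
    (hato.eventually_lt_const hτpos).and (hbto.eventually_lt_const hτpos)
  obtain ⟨n₀, hn₀⟩ := hev.exists_forall_of_atTop
  set n : ℕ := max n₀ (max p q) with hndef
  have hpn : p ≤ n := le_trans (le_max_left p q) (le_max_right _ _)
  have hqn : q ≤ n := le_trans (le_max_right p q) (le_max_right _ _)
  have htail : ∀ i, n < i → a i ≤ τ ∧ b i ≤ τ := by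
    intro i hi
    have : n₀ ≤ i := le_trans (le_max_left _ _) hi.le
    exact ⟨(hn₀ i this).1.le, (hn₀ i this).2.le⟩
  -- explicit feasible point κ₀
  set κ₀ : ℕ → ℝ≥0∞ := fun i =>
    (if i = p then (ENNReal.ofReal A)⁻¹ else 0) + (if i = q then (ENNReal.ofReal B)⁻¹ else 0)
    with hκ₀def
  have hκ₀feas : FeasInf a b κ₀ := by
    constructor
    · calc (1:ℝ≥0∞) = ENNReal.ofReal A * (ENNReal.ofReal A)⁻¹ :=
            (ENNReal.mul_inv_cancel hAE hAT).symm
        _ ≤ ENNReal.ofReal (a p) * κ₀ p := by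
            apply mul_le_mul_right ; simp [hκ₀def]
        _ ≤ ∑' i, ENNReal.ofReal (a i) * κ₀ i := ENNReal.le_tsum p
    · calc (1:ℝ≥0∞) = ENNReal.ofReal B * (ENNReal.ofReal B)⁻¹ :=
            (ENNReal.mul_inv_cancel hBE hBT).symm
        _ ≤ ENNReal.ofReal (b q) * κ₀ q := by
            apply mul_le_mul_right ; simp [hκ₀def]
        _ ≤ ∑' i, ENNReal.ofReal (b i) * κ₀ i := ENNReal.le_tsum q
  have hκ₀sum : ∑' i, κ₀ i ≠ ⊤ := by
    have : ∑' i, κ₀ i = (ENNReal.ofReal A)⁻¹ + (ENNReal.ofReal B)⁻¹ := by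
      rw [hκ₀def, ENNReal.tsum_add, tsum_ite_eq, tsum_ite_eq]
    rw [this]
    exact ENNReal.add_ne_top.2 ⟨ENNReal.inv_ne_top.2 hAE, ENNReal.inv_ne_top.2 hBE⟩
  have hκ₀supp : ∀ i, n < i → κ₀ i = 0 := by
    intro i hi
    have hip : i ≠ p := by rintro rfl; exact absurd hpn (not_le.2 hi)
    have hiq : i ≠ q := by rintro rfl; exact absurd hqn (not_le.2 hi)
    simp [hκ₀def, hip, hiq]
  -- the key reduction lemma
  have hred : ∀ κ' : ℕ → ℝ≥0∞, FeasInf a b κ' → ∑' i, κ' i ≠ ⊤ →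
      ∃ κ'' : ℕ → ℝ≥0∞, FeasInf a b κ'' ∧ (∀ i, n < i → κ'' i = 0) ∧
        ∑' i, κ'' i ≤ ∑' i, κ' i ∧
        ((∃ k, n < k ∧ κ' k ≠ 0) → ∑' i, κ'' i < ∑' i, κ' i) := by
    intro κ' hfeas hfin
    set κres : ℕ → ℝ≥0∞ := fun i => if i ≤ n then κ' i else 0 with hres
    set κt : ℕ → ℝ≥0∞ := fun i => if n < i then κ' i else 0 with ht
    have hsplit : ∀ i, κres i + κt i = κ' i := by
      intro i
      by_cases h : i ≤ n <;> simp [hres, ht, h, not_le.1, not_le.2, not_lt.2]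
    set Sa : ℝ≥0∞ := ∑' i, ENNReal.ofReal (a i) * κt i with hSa
    set Sb : ℝ≥0∞ := ∑' i, ENNReal.ofReal (b i) * κt i with hSb
    set T : ℝ≥0∞ := ∑' i, κt i with hT
    have hTfin : T ≠ ⊤ := by
      refine ne_top_of_le_ne_top hfin (ENNReal.tsum_le_tsum fun i => ?_)
      by_cases h : n < i <;> simp [ht, h]
    have hresfin : (∑' i, κres i) ≠ ⊤ := by
      refine ne_top_of_le_ne_top hfin (ENNReal.tsum_le_tsum fun i => ?_)
      by_cases h : i ≤ n <;> simp [hres, h]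
    have hSale : Sa ≤ ENNReal.ofReal τ * T := by
      rw [hSa, hT, ← ENNReal.tsum_mul_left]
      refine ENNReal.tsum_le_tsum fun i => ?_
      by_cases h : n < i
      · exact mul_le_mul_left (ENNReal.ofReal_le_ofReal (htail i h).1) _
      · simp [ht, h]
    have hSble : Sb ≤ ENNReal.ofReal τ * T := by
      rw [hSb, hT, ← ENNReal.tsum_mul_left]
      refine ENNReal.tsum_le_tsum fun i => ?_
      by_cases h : n < i
      · exact mul_le_mul_left (ENNReal.ofReal_le_ofReal (htail i h).2) _
      · simp [ht, h]
    have hSafin : Sa ≠ ⊤ :=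
      ne_top_of_le_ne_top (ENNReal.mul_ne_top ENNReal.ofReal_ne_top hTfin) hSale
    have hSbfin : Sb ≠ ⊤ :=
      ne_top_of_le_ne_top (ENNReal.mul_ne_top ENNReal.ofReal_ne_top hTfin) hSble
    set κ'' : ℕ → ℝ≥0∞ := fun i => κres i + ((if i = p then Sa / ENNReal.ofReal A else 0)
      + (if i = q then Sb / ENNReal.ofReal B else 0)) with hκ''
    have hsum3 : ∀ c : ℕ → ℝ≥0∞,
        ∑' i, c i * κ'' i = (∑' i, c i * κres i) + (c p * (Sa / ENNReal.ofReal A)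
          + c q * (Sb / ENNReal.ofReal B)) := by
      intro c
      have : ∀ i, c i * κ'' i = c i * κres i + ((fun i => c i * if i = p then Sa / ENNReal.ofReal A else 0) i
          + (fun i => c i * if i = q then Sb / ENNReal.ofReal B else 0) i) := by
        intro i; simp [hκ'', mul_add]
      rw [tsum_congr this, ENNReal.tsum_add, ENNReal.tsum_add]
      congr 1
      congr 1
      · rw [tsum_eq_single p (fun i hi => by simp [hi])]; simp
      · rw [tsum_eq_single q (fun i hi => by simp [hi])]; simp
    have hκ''supp : ∀ i, n < i → κ'' i = 0 := by
      intro i hi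
      have hip : i ≠ p := by rintro rfl; exact absurd hpn (not_le.2 hi)
      have hiq : i ≠ q := by rintro rfl; exact absurd hqn (not_le.2 hi)
      simp [hκ'', hres, hip, hiq, not_le.2 hi]
    have hcsplit : ∀ c : ℕ → ℝ≥0∞, (∑' i, c i * κres i) + (∑' i, c i * κt i) = ∑' i, c i * κ' i := by
      intro c
      rw [← ENNReal.tsum_add]
      exact tsum_congr fun i => by rw [← mul_add, hsplit]
    have hκ''feas : FeasInf a b κ'' := by
      constructor
      · rw [hsum3 (fun i => ENNReal.ofReal (a i))]
        have h1 : ENNReal.ofReal (a p) * (Sa / ENNReal.ofReal A) = Sa := by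
          rw [← hAdef]; exact ENNReal.mul_div_cancel hAE hAT
        calc (1:ℝ≥0∞) ≤ ∑' i, ENNReal.ofReal (a i) * κ' i := hfeas.1
          _ = (∑' i, ENNReal.ofReal (a i) * κres i) + Sa := by
              rw [← hcsplit (fun i => ENNReal.ofReal (a i))]
          _ ≤ _ := by rw [h1]; exact add_le_add_right (le_add_right le_rfl) _
      · rw [hsum3 (fun i => ENNReal.ofReal (b i))]
        have h1 : ENNReal.ofReal (b q) * (Sb / ENNReal.ofReal B) = Sb := by
          rw [← hBdef]; exact ENNReal.mul_div_cancel hBE hBT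
        calc (1:ℝ≥0∞) ≤ ∑' i, ENNReal.ofReal (b i) * κ' i := hfeas.2
          _ = (∑' i, ENNReal.ofReal (b i) * κres i) + Sb := by
              rw [← hcsplit (fun i => ENNReal.ofReal (b i))]
          _ ≤ _ := by rw [h1]; exact add_le_add_right (le_add_left le_rfl) _
    -- mass bound
    have hτhalf : τ / A + τ / B = 1 / 2 := by
      rw [hτdef]
      have hA' : A ≠ 0 := ne_of_gt hA
      have hB' : B ≠ 0 := ne_of_gt hB
      field_simp
    have hmass : ∑' i, κ'' i = (∑' i, κres i) + (Sa / ENNReal.ofReal A + Sb / ENNReal.ofReal B) := by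
      have := hsum3 (fun _ => 1)
      simpa using this
    have hhalf : Sa / ENNReal.ofReal A + Sb / ENNReal.ofReal B ≤ ENNReal.ofReal (1/2) * T := by
      have h1 : Sa / ENNReal.ofReal A ≤ ENNReal.ofReal (τ / A) * T := by
        refine le_trans (ENNReal.div_le_div_right hSale _) (le_of_eq ?_)
        rw [ENNReal.ofReal_div_of_pos hA, div_eq_mul_inv, div_eq_mul_inv, mul_right_comm]
      have h2 : Sb / ENNReal.ofReal B ≤ ENNReal.ofReal (τ / B) * T := by
        refine le_trans (ENNReal.div_le_div_right hSble _) (le_of_eq ?_)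
        rw [ENNReal.ofReal_div_of_pos hB, div_eq_mul_inv, div_eq_mul_inv, mul_right_comm]
      calc Sa / ENNReal.ofReal A + Sb / ENNReal.ofReal B
          ≤ ENNReal.ofReal (τ / A) * T + ENNReal.ofReal (τ / B) * T := add_le_add h1 h2
        _ = ENNReal.ofReal (τ / A + τ / B) * T := by
            rw [ENNReal.ofReal_add (by positivity) (by positivity), add_mul]
        _ = ENNReal.ofReal (1/2) * T := by rw [hτhalf]
    have hmassT : ∑' i, κ' i = (∑' i, κres i) + T := by
      rw [hT, ← ENNReal.tsum_add]; exact (tsum_congr fun i => (hsplit i).symm)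
    refine ⟨κ'', hκ''feas, hκ''supp, ?_, ?_⟩
    · rw [hmass, hmassT]
      refine add_le_add_right (le_trans hhalf ?_) _
      calc ENNReal.ofReal (1/2) * T ≤ 1 * T :=
            mul_le_mul_left (by simp [ENNReal.ofReal_le_one]) _
        _ = T := one_mul T
    · rintro ⟨k, hk, hk0⟩
      have hTpos : T ≠ 0 := by
        intro h0
        have : κt k = 0 := by
          have := ENNReal.le_tsum (f := κt) k
          rw [← hT, h0] at this; simpa using this
        rw [ht] at this; simp [hk] at this; exact hk0 this
      rw [hmass, hmassT]
      refine ENNReal.add_lt_add_left hresfin (lt_of_le_of_lt hhalf ?_)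
      calc ENNReal.ofReal (1/2) * T < 1 * T := by
            apply ENNReal.mul_lt_mul_left hTpos hTfin
            rw [← ENNReal.ofReal_one]
            exact ENNReal.ofReal_lt_ofReal_iff_of_nonneg (by norm_num) |>.2 (by norm_num)
        _ = T := one_mul T
  -- finite-dimensional existence
  set m : ℕ := n + 1 with hm
  set G : Set (Fin m → ℝ≥0∞) := {v | 1 ≤ ∑ i : Fin m, ENNReal.ofReal (a ↑i) * v i ∧
      1 ≤ ∑ i : Fin m, ENNReal.ofReal (b ↑i) * v i} with hG
  have hGclosed : IsClosed G := by
    have hc : ∀ c : ℕ → ℝ, Continuous (fun v : Fin m → ℝ≥0∞ => ∑ i : Fin m, ENNReal.ofReal (c ↑i) * v i) := by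
      intro c
      exact continuous_finset_sum _ fun i _ =>
        (ENNReal.continuous_const_mul ENNReal.ofReal_ne_top).comp
          (continuous_apply (A := fun _ : Fin m => ℝ≥0∞) i)
    exact (isClosed_Ici.preimage (hc a)).inter (isClosed_Ici.preimage (hc b))
  have hrestr : ∀ κ : ℕ → ℝ≥0∞, (∀ i, n < i → κ i = 0) → ∀ c : ℕ → ℝ,
      ∑' i, ENNReal.ofReal (c i) * κ i = ∑ i : Fin m, ENNReal.ofReal (c i) * κ i := by
    intro κ hsupp c
    rw [Fin.sum_univ_eq_sum_range (fun i => ENNReal.ofReal (c i) * κ i) m]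
    refine tsum_eq_sum fun i hi => ?_
    rw [Finset.mem_range, not_lt] at hi
    rw [hsupp i (by omega), mul_zero]
  have hrestr' : ∀ κ : ℕ → ℝ≥0∞, (∀ i, n < i → κ i = 0) →
      ∑' i, κ i = ∑ i : Fin m, κ i := by
    intro κ hsupp
    rw [Fin.sum_univ_eq_sum_range (fun i => κ i) m]
    exact tsum_eq_sum fun i hi => hsupp i (by rw [Finset.mem_range, not_lt] at hi; omega)
  have hGne : G.Nonempty := by
    refine ⟨fun i => κ₀ i, ?_, ?_⟩
    · rw [← hrestr κ₀ hκ₀supp a]; exact hκ₀feas.1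
    · rw [← hrestr κ₀ hκ₀supp b]; exact hκ₀feas.2
  have hGcompact : IsCompact G := hGclosed.isCompact
  obtain ⟨v₀, hv₀G, hv₀min⟩ := hGcompact.exists_isMinOn hGne
    (f := fun v : Fin m → ℝ≥0∞ => ∑ i : Fin m, v i)
    (continuous_finset_sum _ fun i _ => continuous_apply (A := fun _ : Fin m => ℝ≥0∞) i).continuousOn
  set κs : ℕ → ℝ≥0∞ := fun i => if h : i < m then v₀ ⟨i, h⟩ else 0 with hκs
  have hκssupp : ∀ i, n < i → κs i = 0 := by
    intro i hi; simp [hκs]; omega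
  have hκsv : ∀ i : Fin m, κs i = v₀ i := by
    intro i; simp [hκs, i.isLt]
  have hκsfeas : FeasInf a b κs := by
    constructor
    · rw [hrestr κs hκssupp a]
      rw [Finset.sum_congr rfl (fun i _ => by rw [hκsv i])]
      exact hv₀G.1
    · rw [hrestr κs hκssupp b]
      rw [Finset.sum_congr rfl (fun i _ => by rw [hκsv i])]
      exact hv₀G.2
  have hκsopt : ∀ κ' : ℕ → ℝ≥0∞, FeasInf a b κ' → ∑' i, κs i ≤ ∑' i, κ' i := by
    intro κ' hfeas
    by_cases hfin : ∑' i, κ' i = ⊤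
    · rw [hfin]; exact le_top
    obtain ⟨κ'', hfeas'', hsupp'', hle'', _⟩ := hred κ' hfeas hfin
    refine le_trans ?_ hle''
    set v' : Fin m → ℝ≥0∞ := fun i => κ'' i with hv'
    have hv'G : v' ∈ G := by
      constructor
      · rw [← hrestr κ'' hsupp'' a]; exact hfeas''.1
      · rw [← hrestr κ'' hsupp'' b]; exact hfeas''.2
    calc ∑' i, κs i = ∑ i : Fin m, κs i := hrestr' κs hκssupp
      _ = ∑ i, v₀ i := Finset.sum_congr rfl (fun i _ => hκsv i)
      _ ≤ ∑ i, v' i := hv₀min hv'G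
      _ = ∑' i, κ'' i := (hrestr' κ'' hsupp'').symm
  refine ⟨n, ⟨κs, hκsfeas, hκsopt⟩, ?_⟩
  intro κ' hfeas hopt i hi
  by_contra hne
  have hfin : ∑' i, κ' i ≠ ⊤ :=
    ne_top_of_le_ne_top hκ₀sum (hopt κ₀ hκ₀feas)
  obtain ⟨κ'', hfeas'', _, _, hstrict⟩ := hred κ' hfeas hfin
  exact absurd (hopt κ'' hfeas'') (not_le.2 (hstrict ⟨i, hi, hne⟩))

/-- Theorem 4.4 (existence part): for i.i.d. nonnegative X_i regularly varying with
index -1 and summable exponents with positive suprema, (a) the partial products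
∏_{i<n} X_i^{α_i}, ∏_{i<n} X_i^{β_i} converge a.s., and (b) the infinite-dimensional
linear program has an optimal solution and every optimal solution vanishes beyond
some fixed finite index n, so the problem reduces to a finite-dimensional one. -/
theorem infinite_power_products {Ω : Type*} [MeasurableSpace Ω] (P : Measure Ω)
    [IsProbabilityMeasure P] (X : ℕ → Ω → ℝ)
    (hXmeas : ∀ i, Measurable (X i))
    (hX0 : ∀ i ω, 0 ≤ X i ω)
    (hindep : iIndepFun X P)
    (hid : ∀ i, IdentDistrib (X i) (X 0) P P)
    (hrv : RegVarNegOne P (X 0))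
    (a b : ℕ → ℝ) (ha : ∀ i, 0 ≤ a i) (hb : ∀ i, 0 ≤ b i)
    (hamax : ∃ i, 0 < a i) (hbmax : ∃ i, 0 < b i)
    (hasum : Summable a) (hbsum : Summable b) :
    -- (a) almost sure convergence of the partial products
    (∀ᵐ ω ∂P,
      (∃ L : ℝ, Tendsto (fun n => ∏ i ∈ Finset.range n, X i ω ^ a i) atTop (nhds L)) ∧
      (∃ L : ℝ, Tendsto (fun n => ∏ i ∈ Finset.range n, X i ω ^ b i) atTop (nhds L))) ∧
    -- (b) the linear program has an optimal solution, and all optimal solutions are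
    -- supported on {0,...,n} for a fixed n
    (∃ n : ℕ,
      (∃ κ : ℕ → ℝ≥0∞, FeasInf a b κ ∧
        (∀ κ' : ℕ → ℝ≥0∞, FeasInf a b κ' → ∑' i, κ i ≤ ∑' i, κ' i)) ∧
      (∀ κ' : ℕ → ℝ≥0∞, FeasInf a b κ' →
        (∀ κ'' : ℕ → ℝ≥0∞, FeasInf a b κ'' → ∑' i, κ' i ≤ ∑' i, κ'' i) →
        ∀ i, n < i → κ' i = 0)) := by
  constructor
  · filter_upwards [aux_summable P X hXmeas hX0 hid hrv a ha hasum,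
      aux_summable P X hXmeas hX0 hid hrv b hb hbsum] with ω h1 h2
    exact ⟨converge_of_summable _ (fun i => hX0 i ω) a ha h1,
      converge_of_summable _ (fun i => hX0 i ω) b hb h2⟩
  · exact aux_lp a b ha hb hamax hbmax hasum hbsum
end
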